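/- arXiv:2511.06650 — 8 statements merged into one kernel-verified Lean document; each statement's English description precedes it below -/
import Mathlib

section
/- For every irrational real number β and every ε > 0, there exists an infinite sequence x_1, x_2, ... of positive integers such that for every h in FS({x_n}) (the set of all finite sums of distinct elements of the sequence), the distance from βh to the nearest integer is less than ε. -/
/-- Distance from a real number to the nearest integer. -/
noncomputable def nid (x : ℝ) : ℝ := min (Int.fract x) (1 - Int.fract x)

lemma nid_nonneg (x : ℝ) : 0 ≤ nid x := by
  have h1 := Int.fract_nonneg x
  have h2 := Int.fract_lt_one x
  unfold nid
  simp only [le_min_iff]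
  constructor <;> linarith

lemma nid_le_abs (x : ℝ) (j : ℤ) : nid x ≤ |x - j| := by
  have hf : Int.fract x = x - ⌊x⌋ := rfl
  rcases le_or_gt j ⌊x⌋ with h | h
  · have hj : (j : ℝ) ≤ ⌊x⌋ := by exact_mod_cast h
    have : Int.fract x ≤ x - j := by rw [hf]; linarith
    calc nid x ≤ Int.fract x := min_le_left _ _
      _ ≤ x - j := this
      _ ≤ |x - j| := le_abs_self _
  · have hj : (⌊x⌋ : ℝ) + 1 ≤ j := by exact_mod_cast h
    have : 1 - Int.fract x ≤ j - x := by rw [hf]; linarith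
    calc nid x ≤ 1 - Int.fract x := min_le_right _ _
      _ ≤ j - x := this
      _ ≤ |x - j| := by rw [abs_sub_comm]; exact le_abs_self _

lemma nid_exists (x : ℝ) : ∃ j : ℤ, nid x = |x - j| := by
  have h1 := Int.fract_nonneg x
  have h2 := Int.fract_lt_one x
  have hf : Int.fract x = x - ⌊x⌋ := rfl
  rcases le_or_gt (Int.fract x) (1 - Int.fract x) with h | h
  · exact ⟨⌊x⌋, by rw [nid, min_eq_left h, hf, abs_of_nonneg (by linarith)]⟩
  · refine ⟨⌊x⌋ + 1, ?_⟩
    rw [nid, min_eq_right h.le]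
    push_cast
    rw [abs_of_nonpos (by rw [hf] at h; linarith), hf]; ring

lemma nid_add_le (a b : ℝ) : nid (a + b) ≤ nid a + nid b := by
  obtain ⟨ja, hja⟩ := nid_exists a
  obtain ⟨jb, hjb⟩ := nid_exists b
  calc nid (a + b) ≤ |a + b - (ja + jb : ℤ)| := nid_le_abs _ _
    _ = |(a - ja) + (b - jb)| := by push_cast; ring_nf
    _ ≤ |a - ja| + |b - jb| := abs_add_le _ _
    _ = nid a + nid b := by rw [hja, hjb]

lemma nid_zero : nid 0 = 0 := by simp [nid]

lemma nid_sum_le (f : ℕ → ℝ) (s : Finset ℕ) :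
    nid (∑ i ∈ s, f i) ≤ ∑ i ∈ s, nid (f i) := by
  induction s using Finset.induction with
  | empty => simp [nid_zero]
  | insert _ _ h ih =>
    rw [Finset.sum_insert h, Finset.sum_insert h]
    exact le_trans (nid_add_le _ _) (by linarith)

lemma nid_small (β : ℝ) {δ : ℝ} (hδ : 0 < δ) :
    ∃ q : ℕ, 0 < q ∧ nid (β * q) < δ := by
  obtain ⟨n, hn⟩ := exists_nat_one_div_lt hδ
  obtain ⟨j, k, hk0, _, hjk⟩ := Real.exists_int_int_abs_mul_sub_le β (Nat.succ_pos n)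
  refine ⟨k.toNat, by omega, ?_⟩
  have hcast : ((k.toNat : ℕ) : ℝ) = (k : ℝ) := by
    exact_mod_cast Int.toNat_of_nonneg hk0.le
  calc nid (β * k.toNat) ≤ |β * k.toNat - j| := nid_le_abs _ _
    _ = |(k : ℝ) * β - j| := by rw [hcast, mul_comm]
    _ ≤ 1 / (n + 1 + 1) := by exact_mod_cast hjk
    _ ≤ 1 / (n + 1) := by
        apply one_div_le_one_div_of_le (by positivity) (by linarith)
    _ < δ := hn

/-- For every irrational `β` and every `ε > 0`, there is an infinite sequence of
positive integers all of whose finite sums `h` of distinct terms satisfy `‖βh‖ < ε`. -/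
theorem raimi_FS_small_norm (β : ℝ) (hβ : Irrational β) (ε : ℝ) (hε : 0 < ε) :
    ∃ x : ℕ → ℕ, (∀ n, 0 < x n) ∧
      ∀ s : Finset ℕ, s.Nonempty → nid (β * (∑ i ∈ s, x i : ℕ)) < ε := by
  have hsel : ∀ n : ℕ, ∃ q : ℕ, 0 < q ∧ nid (β * q) < ε * (1/2)^(n+1) := by
    intro n
    exact nid_small β (by positivity)
  choose x hx1 hx2 using hsel
  refine ⟨x, hx1, fun s hs => ?_⟩
  have key : nid (β * (∑ i ∈ s, x i : ℕ)) ≤ ∑ i ∈ s, nid (β * x i) := by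
    have : (β * (∑ i ∈ s, x i : ℕ)) = ∑ i ∈ s, β * x i := by
      push_cast
      rw [Finset.mul_sum]
    rw [this]
    exact nid_sum_le _ _
  have lt1 : ∑ i ∈ s, nid (β * x i) < ∑ i ∈ s, ε * (1/2)^(i+1) :=
    Finset.sum_lt_sum_of_nonempty hs fun i _ => hx2 i
  have le2 : ∑ i ∈ s, ε * (1/2 : ℝ)^(i+1) ≤ ε := by
    set N := s.sup id + 1 with hN
    have hsub : s ⊆ Finset.range N := by
      intro i hi
      simp only [Finset.mem_range, hN]
      exact Nat.lt_succ_of_le (Finset.le_sup (f := id) hi)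
    calc ∑ i ∈ s, ε * (1/2 : ℝ)^(i+1)
        ≤ ∑ i ∈ Finset.range N, ε * (1/2 : ℝ)^(i+1) :=
          Finset.sum_le_sum_of_subset_of_nonneg hsub (fun i _ _ => by positivity)
      _ = (ε/2) * ∑ i ∈ Finset.range N, (1/2 : ℝ)^i := by
          rw [Finset.mul_sum]; apply Finset.sum_congr rfl; intro i _; ring
      _ ≤ (ε/2) * 2 := by
          have := sum_geometric_two_le N
          nlinarith
      _ = ε := by ring
  linarith
end

section
/- Let β be irrational, and let P^{(1)}, …, P^{(f)} ∈ ℤ[x] be non-constant polynomials with P^{(j)}(0) = 0 for all j. Define v(n) = ({βP^{(1)}(n)}, …, {βP^{(f)}(n)}) ∈ 𝕋^f, the relation lattice R = {m ∈ ℤ^f : Σ_j m_j P^{(j)} = 0 in ℤ[x]}, and H' = closure of the subgroup of 𝕋^f generated by {v(n) : n ∈ ℕ}. Then the annihilator Ann(H') = {m ∈ ℤ^f : e^{2πi m·z} = 1 for all z ∈ H'} equals R. -/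
/-- Sum of zsmuls of real coercions into `UnitAddCircle` equals coercion of the real sum. -/
lemma sum_zsmul_coe {f : ℕ} (m : Fin f → ℤ) (x : Fin f → ℝ) :
    (∑ j, m j • ((x j : UnitAddCircle))) = ((∑ j, m j • x j : ℝ) : UnitAddCircle) := by
  induction (Finset.univ : Finset (Fin f)) using Finset.induction with
  | empty => simp
  | insert _ _ h ih => rw [Finset.sum_insert h, Finset.sum_insert h, ih, ← AddCircle.coe_zsmul,
      ← AddCircle.coe_add]

/-- Proposition: the annihilator of the closed subgroup `H'` of `𝕋^f` generated by the
points `v(n) = ({βP⁽¹⁾(n)}, …, {βP⁽ᶠ⁾(n)})` equals the relation lattice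
`R = {m ∈ ℤ^f : Σ_j m_j P⁽ʲ⁾ = 0}`.  (The character `z ↦ e^{2πi m·z}` is trivial at `z`
iff `Σ_j m_j z_j = 0` in `ℝ/ℤ`.) -/
theorem annihilator_eq_relation_lattice (f : ℕ) (hf : 0 < f)
    (β : ℝ) (hβ : Irrational β) (P : Fin f → Polynomial ℤ)
    (hdeg : ∀ j, 0 < (P j).natDegree) (h0 : ∀ j, (P j).eval 0 = 0)
    (v : ℕ → (Fin f → UnitAddCircle))
    (hv : ∀ n j, v n j = ((β * ((P j).eval (n : ℤ) : ℤ) : ℝ) : UnitAddCircle))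
    (H' : AddSubgroup (Fin f → UnitAddCircle))
    (hH' : H' = (AddSubgroup.closure (Set.range v)).topologicalClosure) :
    {m : Fin f → ℤ | ∀ z ∈ H', (∑ j, m j • z j) = (0 : UnitAddCircle)} =
      {m : Fin f → ℤ | (∑ j, m j • P j) = 0} := by
  ext m
  simp only [Set.mem_setOf_eq]
  set Q : Polynomial ℤ := ∑ j, m j • P j with hQdef
  have hQeval : ∀ n : ℤ, Q.eval n = ∑ j, m j * (P j).eval n := by
    intro n
    simp [hQdef, Polynomial.eval_finset_sum]
  have key : ∀ n : ℕ, (∑ j, m j • v n j) = ((β * (Q.eval (n : ℤ) : ℤ) : ℝ) : UnitAddCircle) := by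
    intro n
    have h1 : (∑ j, m j • v n j)
        = ∑ j, m j • (((β * ((P j).eval (n : ℤ) : ℤ) : ℝ) : UnitAddCircle)) := by
      simp [hv]
    rw [h1, sum_zsmul_coe]
    congr 1
    rw [hQeval]
    push_cast
    rw [Finset.mul_sum]
    refine Finset.sum_congr rfl fun j _ => ?_
    rw [zsmul_eq_mul]
    ring
  constructor
  · -- annihilator ⊆ relation lattice
    intro h
    have hroot : ∀ n : ℕ, Q.eval (n : ℤ) = 0 := by
      intro n
      have hvn : v n ∈ H' := by
        rw [hH']
        exact AddSubgroup.le_topologicalClosure _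
          (AddSubgroup.subset_closure (Set.mem_range_self n))
      have h0' := h (v n) hvn
      rw [key n] at h0'
      rw [AddCircle.coe_eq_zero_iff] at h0'
      obtain ⟨k, hk⟩ := h0'
      set c : ℤ := Q.eval (n : ℤ) with hc
      by_contra hne
      have hirr : Irrational ((c : ℝ) * β) := hβ.intCast_mul hne
      apply hirr.ne_int k
      rw [mul_comm]
      simpa using hk.symm
    have hinf : {x : ℤ | Q.IsRoot x}.Infinite := by
      apply Set.Infinite.mono (s := Set.range ((↑) : ℕ → ℤ))
      · rintro x ⟨n, rfl⟩
        exact hroot n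
      · exact Set.infinite_range_of_injective fun a b hab => by exact_mod_cast hab
    exact Polynomial.eq_zero_of_infinite_isRoot Q hinf
  · -- relation lattice ⊆ annihilator
    intro hQ0 z hz
    let φ : (Fin f → UnitAddCircle) →+ UnitAddCircle :=
      ∑ j, (zsmulAddGroupHom (m j)).comp (Pi.evalAddMonoidHom (fun _ => UnitAddCircle) j)
    have hφ : ∀ w, φ w = ∑ j, m j • w j := by
      intro w
      simp [φ, AddMonoidHom.finset_sum_apply, zsmulAddGroupHom]
    have hcont : Continuous φ := by
      have h2 : Continuous fun w : Fin f → UnitAddCircle => ∑ j, m j • w j := by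
        apply continuous_finset_sum
        intro j _
        exact (continuous_apply j).zsmul (m j)
      simpa [funext hφ] using h2
    have hKclosed : IsClosed ((φ.ker : AddSubgroup (Fin f → UnitAddCircle)) :
        Set (Fin f → UnitAddCircle)) := by
      have : ((φ.ker : AddSubgroup (Fin f → UnitAddCircle)) : Set (Fin f → UnitAddCircle))
          = {w | φ w = 0} := by
        ext w; simp [AddMonoidHom.mem_ker]
      rw [this]
      exact isClosed_eq hcont continuous_const
    have hle : AddSubgroup.closure (Set.range v) ≤ φ.ker := by
      rw [AddSubgroup.closure_le]
      rintro w ⟨n, rfl⟩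
      show φ (v n) = 0
      rw [hφ, key n, hQ0]
      simp
    have hH'le : H' ≤ φ.ker := hH' ▸ AddSubgroup.topologicalClosure_minimal _ hle hKclosed
    have hker := hH'le hz
    rw [AddMonoidHom.mem_ker, hφ] at hker
    exact hker
end

section
/- Let β be irrational, and let P^{(1)}, …, P^{(f)} ∈ ℤ[x] be non-constant polynomials with P^{(j)}(0) = 0 for all j. Let R be the lattice of integer vectors m with Σ_j m_j P^{(j)} ≡ 0, and H = {z ∈ 𝕋^f : m·z ∈ ℤ for all m ∈ R}. Then the sequence v(n) = ({βP^{(1)}(n)}, …, {βP^{(f)}(n)}) is equidistributed on H with respect to the Haar probability measure on H. -/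
open Filter Finset Complex

noncomputable def ee (x : ℝ) : ℂ := Complex.exp (2 * Real.pi * x * Complex.I)

lemma ee_add (x y : ℝ) : ee (x + y) = ee x * ee y := by
  simp only [ee, ← Complex.exp_add]
  congr 1
  push_cast
  ring

lemma norm_ee (x : ℝ) : ‖ee x‖ = 1 := by
  simp [ee, Complex.norm_exp]

lemma conj_ee (x : ℝ) : (starRingEnd ℂ) (ee x) = ee (-x) := by
  simp only [ee, ← Complex.exp_conj]
  congr 1
  simp only [map_mul, Complex.conj_I, Complex.conj_ofReal, map_ofNat]
  push_cast
  ring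

lemma ee_ne_one {x : ℝ} (hx : Irrational x) : ee x ≠ 1 := by
  intro h
  rw [ee, Complex.exp_eq_one_iff] at h
  obtain ⟨n, hn⟩ := h
  apply hx.ne_int n
  have hπ : (Real.pi : ℂ) ≠ 0 := by exact_mod_cast Real.pi_ne_zero
  have hx' : (x : ℂ) = n := by
    have h1 : (2 * (Real.pi:ℂ) * x) * Complex.I = ((n:ℂ) * (2 * Real.pi)) * Complex.I := by
      linear_combination hn
    have h2 := mul_right_cancel₀ Complex.I_ne_zero h1
    have h3 : (2 * (Real.pi:ℂ)) * x = (2 * (Real.pi:ℂ)) * n := by linear_combination h2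
    exact mul_left_cancel₀ (mul_ne_zero two_ne_zero hπ) h3
  exact_mod_cast hx'

lemma ee_nat_mul (x : ℝ) (n : ℕ) : ee (x * n) = ee x ^ n := by
  rw [ee, ee, ← Complex.exp_nat_mul]
  congr 1
  push_cast
  ring

lemma shift_bound (a : ℕ → ℂ) (ha : ∀ n, ‖a n‖ ≤ 1) (s N : ℕ) :
    ‖(∑ n ∈ range N, a (n + s)) - ∑ n ∈ range N, a n‖ ≤ 2 * s := by
  have h1 : (∑ n ∈ range N, a (n + s)) = ∑ k ∈ Ico s (s + N), a k := by
    rw [Finset.sum_Ico_eq_sum_range]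
    simp only [add_tsub_cancel_left]
    exact Finset.sum_congr rfl fun i _ => by rw [add_comm]
  have h2 : (∑ k ∈ Ico 0 s, a k) + ∑ k ∈ Ico s (s + N), a k = ∑ k ∈ Ico 0 (s + N), a k :=
    Finset.sum_Ico_consecutive _ (Nat.zero_le s) (Nat.le_add_right s N)
  have h3 : (∑ k ∈ Ico 0 N, a k) + ∑ k ∈ Ico N (N + s), a k = ∑ k ∈ Ico 0 (N + s), a k :=
    Finset.sum_Ico_consecutive _ (Nat.zero_le N) (Nat.le_add_right N s)
  have h4 : (∑ n ∈ range N, a (n + s)) - ∑ n ∈ range N, a n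
      = (∑ k ∈ Ico N (N + s), a k) - ∑ k ∈ Ico 0 s, a k := by
    rw [h1]
    have : ∑ n ∈ range N, a n = ∑ k ∈ Ico 0 N, a k := by rw [Finset.range_eq_Ico]
    rw [this]
    have hc : (N + s) = (s + N) := by ring
    rw [hc] at h3
    rw [hc]
    linear_combination h2 - h3
  rw [h4]
  have b1 : ‖∑ k ∈ Ico N (N + s), a k‖ ≤ s := by
    calc ‖∑ k ∈ Ico N (N + s), a k‖ ≤ ∑ k ∈ Ico N (N + s), ‖a k‖ := norm_sum_le _ _
    _ ≤ ∑ k ∈ Ico N (N + s), 1 := Finset.sum_le_sum fun k _ => ha k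
    _ = s := by simp
  have b2 : ‖∑ k ∈ Ico 0 s, a k‖ ≤ s := by
    calc ‖∑ k ∈ Ico 0 s, a k‖ ≤ ∑ k ∈ Ico 0 s, ‖a k‖ := norm_sum_le _ _
    _ ≤ ∑ k ∈ Ico 0 s, 1 := Finset.sum_le_sum fun k _ => ha k
    _ = s := by simp
  calc ‖(∑ k ∈ Ico N (N + s), a k) - ∑ k ∈ Ico 0 s, a k‖
      ≤ ‖∑ k ∈ Ico N (N + s), a k‖ + ‖∑ k ∈ Ico 0 s, a k‖ := norm_sub_le _ _
  _ ≤ s + s := add_le_add b1 b2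
  _ = 2 * s := by ring

lemma pair_bound (a : ℕ → ℂ) (ha : ∀ n, ‖a n‖ ≤ 1) (N H : ℕ) {r s : ℕ} (hs : s < r) (hr : r < H) :
    ‖∑ n ∈ range N, a (n + r) * (starRingEnd ℂ) (a (n + s))‖ ≤
      (∑ h ∈ Icc 1 (H - 1), ‖∑ n ∈ range N, a (n + h) * (starRingEnd ℂ) (a n)‖) + 2 * H := by
  set h := r - s with hh
  set c : ℕ → ℂ := fun k => a (k + h) * (starRingEnd ℂ) (a k) with hc
  have hcb : ∀ k, ‖c k‖ ≤ 1 := by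
    intro k
    calc ‖c k‖ = ‖a (k + h)‖ * ‖a k‖ := by rw [hc]; simp [norm_mul]
    _ ≤ 1 * 1 := mul_le_mul (ha _) (ha _) (norm_nonneg _) zero_le_one
    _ = 1 := one_mul 1
  have heq : ∀ n, a (n + r) * (starRingEnd ℂ) (a (n + s)) = c (n + s) := by
    intro n
    rw [hc]
    congr 2
    omega
  have h1 : (∑ n ∈ range N, a (n + r) * (starRingEnd ℂ) (a (n + s)))
      = ∑ n ∈ range N, c (n + s) := Finset.sum_congr rfl fun n _ => heq n
  have h2 := shift_bound c hcb s N
  have h3 : ‖∑ n ∈ range N, c (n + s)‖ ≤ ‖∑ n ∈ range N, c n‖ + 2 * s := by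
    calc ‖∑ n ∈ range N, c (n + s)‖
        = ‖(∑ n ∈ range N, c n) + ((∑ n ∈ range N, c (n + s)) - ∑ n ∈ range N, c n)‖ := by
          congr 1; ring
    _ ≤ ‖∑ n ∈ range N, c n‖ + ‖(∑ n ∈ range N, c (n + s)) - ∑ n ∈ range N, c n‖ :=
          norm_add_le _ _
    _ ≤ ‖∑ n ∈ range N, c n‖ + 2 * s := by linarith
  have hmem : h ∈ Icc 1 (H - 1) := by
    rw [Finset.mem_Icc]
    omega
  have h4 : ‖∑ n ∈ range N, c n‖ ≤
      ∑ h' ∈ Icc 1 (H - 1), ‖∑ n ∈ range N, a (n + h') * (starRingEnd ℂ) (a n)‖ :=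
    Finset.single_le_sum (f := fun h' => ‖∑ n ∈ range N, a (n + h') * (starRingEnd ℂ) (a n)‖)
      (fun i _ => norm_nonneg _) hmem
  have hsH : (s : ℝ) ≤ H := by
    have : s < H := lt_trans hs hr
    exact_mod_cast this.le
  rw [h1]
  calc ‖∑ n ∈ range N, c (n + s)‖ ≤ ‖∑ n ∈ range N, c n‖ + 2 * s := h3
  _ ≤ (∑ h' ∈ Icc 1 (H - 1), ‖∑ n ∈ range N, a (n + h') * (starRingEnd ℂ) (a n)‖) + 2 * H := by
      linarith

lemma key_ineq (a : ℕ → ℂ) (ha : ∀ n, ‖a n‖ ≤ 1) (H N : ℕ) (hH : 0 < H) :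
    ‖∑ n ∈ range N, a n‖ ^ 2 ≤
      2 * (N : ℝ) ^ 2 / H
        + 2 * N * (∑ h ∈ Icc 1 (H - 1), ‖∑ n ∈ range N, a (n + h) * (starRingEnd ℂ) (a n)‖)
        + 4 * H * N + 8 * H ^ 2 := by
  set W : ℝ := ∑ h ∈ Icc 1 (H - 1), ‖∑ n ∈ range N, a (n + h) * (starRingEnd ℂ) (a n)‖ with hW
  have hWnn : 0 ≤ W := Finset.sum_nonneg fun _ _ => norm_nonneg _
  set b : ℕ → ℂ := fun n => ∑ r ∈ range H, a (n + r) with hb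
  set A : ℝ := ‖∑ n ∈ range N, b n‖ with hA
  -- Step 1 : H * ‖S‖ ≤ A + 2 H^2
  have step1 : (H : ℝ) * ‖∑ n ∈ range N, a n‖ ≤ A + 2 * H ^ 2 := by
    have e1 : (∑ n ∈ range N, b n) = ∑ r ∈ range H, ∑ n ∈ range N, a (n + r) := by
      rw [hb]; exact Finset.sum_comm
    have e2 : (H : ℂ) * (∑ n ∈ range N, a n) = ∑ r ∈ range H, ∑ n ∈ range N, a n := by
      rw [Finset.sum_const, Finset.card_range, nsmul_eq_mul]
    have e3 : ‖(H : ℂ) * (∑ n ∈ range N, a n) - ∑ n ∈ range N, b n‖ ≤ 2 * H ^ 2 := by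
      rw [e1, e2, ← Finset.sum_sub_distrib]
      calc ‖∑ r ∈ range H, ((∑ n ∈ range N, a n) - ∑ n ∈ range N, a (n + r))‖
          ≤ ∑ r ∈ range H, ‖(∑ n ∈ range N, a n) - ∑ n ∈ range N, a (n + r)‖ :=
            norm_sum_le _ _
      _ ≤ ∑ r ∈ range H, 2 * (H : ℝ) := by
            refine Finset.sum_le_sum fun r hr => ?_
            rw [norm_sub_rev]
            refine le_trans (shift_bound a ha r N) ?_
            have : (r : ℝ) ≤ H := by
              have := Finset.mem_range.mp hr; exact_mod_cast this.le
            linarith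
      _ = 2 * H ^ 2 := by rw [Finset.sum_const, Finset.card_range, nsmul_eq_mul]; ring
    have e4 : (H : ℝ) * ‖∑ n ∈ range N, a n‖ = ‖(H : ℂ) * (∑ n ∈ range N, a n)‖ := by
      rw [norm_mul]
      simp
    rw [e4]
    calc ‖(H : ℂ) * (∑ n ∈ range N, a n)‖
        = ‖(∑ n ∈ range N, b n) + ((H : ℂ) * (∑ n ∈ range N, a n) - ∑ n ∈ range N, b n)‖ := by
          congr 1; ring
    _ ≤ ‖∑ n ∈ range N, b n‖ + ‖(H : ℂ) * (∑ n ∈ range N, a n) - ∑ n ∈ range N, b n‖ :=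
          norm_add_le _ _
    _ ≤ A + 2 * H ^ 2 := by rw [hA]; linarith
  -- Step 2 : A^2 ≤ N * ∑ ‖b n‖^2
  have step2 : A ^ 2 ≤ (N : ℝ) * ∑ n ∈ range N, ‖b n‖ ^ 2 := by
    have c1 : A ≤ ∑ n ∈ range N, ‖b n‖ := norm_sum_le _ _
    have c2 : (∑ n ∈ range N, ‖b n‖) ^ 2 ≤ (N : ℝ) * ∑ n ∈ range N, ‖b n‖ ^ 2 := by
      have := Finset.sum_mul_sq_le_sq_mul_sq (range N) (fun _ => (1 : ℝ)) (fun n => ‖b n‖)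
      simpa using this
    have c3 : A ^ 2 ≤ (∑ n ∈ range N, ‖b n‖) ^ 2 := by
      have : (0:ℝ) ≤ A := norm_nonneg _
      nlinarith [Finset.sum_nonneg (fun n (_ : n ∈ range N) => norm_nonneg (b n))]
    linarith
  -- Step 3 : ∑ ‖b n‖^2 ≤ H*N + H^2*(W + 2H)
  have step3 : (∑ n ∈ range N, ‖b n‖ ^ 2) ≤ (H : ℝ) * N + (H : ℝ) ^ 2 * (W + 2 * H) := by
    have d1 : ∀ n, (‖b n‖ : ℝ) ^ 2 = (b n * (starRingEnd ℂ) (b n)).re := by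
      intro n
      rw [Complex.mul_conj, Complex.ofReal_re, Complex.sq_norm]
    have d2 : ∀ n, b n * (starRingEnd ℂ) (b n)
        = ∑ r ∈ range H, ∑ s ∈ range H, a (n + r) * (starRingEnd ℂ) (a (n + s)) := by
      intro n
      rw [hb]
      rw [map_sum, Finset.sum_mul_sum]
    have d3 : (∑ n ∈ range N, ‖b n‖ ^ 2)
        = (∑ r ∈ range H, ∑ s ∈ range H, ∑ n ∈ range N,
            a (n + r) * (starRingEnd ℂ) (a (n + s))).re := by
      calc (∑ n ∈ range N, ‖b n‖ ^ 2)
          = ∑ n ∈ range N, (b n * (starRingEnd ℂ) (b n)).re :=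
            Finset.sum_congr rfl fun n _ => d1 n
      _ = (∑ n ∈ range N, b n * (starRingEnd ℂ) (b n)).re := (Complex.re_sum _ _).symm
      _ = (∑ n ∈ range N, ∑ r ∈ range H, ∑ s ∈ range H,
            a (n + r) * (starRingEnd ℂ) (a (n + s))).re := by
            congr 1
            exact Finset.sum_congr rfl fun n _ => d2 n
      _ = (∑ r ∈ range H, ∑ s ∈ range H, ∑ n ∈ range N,
            a (n + r) * (starRingEnd ℂ) (a (n + s))).re := by
            congr 1
            rw [Finset.sum_comm]
            exact Finset.sum_congr rfl fun r _ => Finset.sum_comm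
    have d4 : (∑ r ∈ range H, ∑ s ∈ range H, ∑ n ∈ range N,
            a (n + r) * (starRingEnd ℂ) (a (n + s))).re
        ≤ ∑ r ∈ range H, ∑ s ∈ range H,
            ‖∑ n ∈ range N, a (n + r) * (starRingEnd ℂ) (a (n + s))‖ := by
      refine le_trans (Complex.re_le_norm _) ?_
      refine le_trans (norm_sum_le _ _) (Finset.sum_le_sum fun r _ => ?_)
      exact norm_sum_le _ _
    have d5 : ∀ r ∈ range H, ∀ s ∈ range H,
        ‖∑ n ∈ range N, a (n + r) * (starRingEnd ℂ) (a (n + s))‖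
          ≤ (W + 2 * H) + (if r = s then (N : ℝ) else 0) := by
      intro r hr s hs
      rw [Finset.mem_range] at hr hs
      rcases lt_trichotomy r s with hlt | heq | hgt
      · rw [if_neg hlt.ne]
        have hconj : (∑ n ∈ range N, a (n + r) * (starRingEnd ℂ) (a (n + s)))
            = (starRingEnd ℂ) (∑ n ∈ range N, a (n + s) * (starRingEnd ℂ) (a (n + r))) := by
          rw [map_sum]
          refine Finset.sum_congr rfl fun n _ => ?_
          simp [map_mul, mul_comm]
        rw [hconj, RCLike.norm_conj, add_zero]
        exact pair_bound a ha N H hlt hs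
      · subst heq
        rw [if_pos rfl]
        have : ‖∑ n ∈ range N, a (n + r) * (starRingEnd ℂ) (a (n + r))‖ ≤ N := by
          refine le_trans (norm_sum_le _ _) ?_
          calc ∑ n ∈ range N, ‖a (n + r) * (starRingEnd ℂ) (a (n + r))‖
              ≤ ∑ n ∈ range N, 1 := by
                refine Finset.sum_le_sum fun n _ => ?_
                rw [norm_mul, RCLike.norm_conj]
                exact mul_le_one₀ (ha _) (norm_nonneg _) (ha _)
          _ = N := by simp
        have hH0 : (0:ℝ) ≤ H := Nat.cast_nonneg H
        linarith
      · rw [if_neg hgt.ne', add_zero]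
        exact pair_bound a ha N H hgt hr
    have d6 : (∑ r ∈ range H, ∑ s ∈ range H,
          ((W + 2 * (H:ℝ)) + (if r = s then (N : ℝ) else 0)))
        = (H:ℝ) ^ 2 * (W + 2 * H) + H * N := by
      have inner : ∀ r ∈ range H, (∑ s ∈ range H,
          ((W + 2 * (H:ℝ)) + (if r = s then (N : ℝ) else 0)))
          = (H:ℝ) * (W + 2 * H) + N := by
        intro r hr
        rw [Finset.sum_add_distrib, Finset.sum_const, Finset.card_range, nsmul_eq_mul,
          Finset.sum_ite_eq, if_pos hr]
      rw [Finset.sum_congr rfl inner, Finset.sum_const, Finset.card_range, nsmul_eq_mul]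
      ring
    calc (∑ n ∈ range N, ‖b n‖ ^ 2)
        ≤ ∑ r ∈ range H, ∑ s ∈ range H,
            ‖∑ n ∈ range N, a (n + r) * (starRingEnd ℂ) (a (n + s))‖ := by rw [d3]; exact d4
    _ ≤ ∑ r ∈ range H, ∑ s ∈ range H,
          ((W + 2 * (H:ℝ)) + (if r = s then (N : ℝ) else 0)) :=
        Finset.sum_le_sum fun r hr => Finset.sum_le_sum fun s hs => d5 r hr s hs
    _ = (H:ℝ) ^ 2 * (W + 2 * H) + H * N := d6
    _ = (H : ℝ) * N + (H : ℝ) ^ 2 * (W + 2 * H) := by ring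
  -- combine
  have hHpos : (0:ℝ) < H := by exact_mod_cast hH
  have hNnn : (0:ℝ) ≤ N := Nat.cast_nonneg N
  have hAnn : (0:ℝ) ≤ A := norm_nonneg _
  have hSnn : (0:ℝ) ≤ ‖∑ n ∈ range N, a n‖ := norm_nonneg _
  have main : (H:ℝ)^2 * ‖∑ n ∈ range N, a n‖^2
      ≤ 2*H*(N:ℝ)^2 + (H:ℝ)^2*(2*N*W + 4*H*N + 8*H^2) := by
    have sq1 := mul_self_le_mul_self (mul_nonneg hHpos.le hSnn) step1
    have s23 : A^2 ≤ (N:ℝ)*((H:ℝ)*N + (H:ℝ)^2*(W + 2*H)) :=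
      step2.trans (mul_le_mul_of_nonneg_left step3 hNnn)
    nlinarith [sq1, s23, sq_nonneg (A - 2*(H:ℝ)^2)]
  calc ‖∑ n ∈ range N, a n‖ ^ 2
      = ((H:ℝ)^2 * ‖∑ n ∈ range N, a n‖^2) / (H:ℝ)^2 := by field_simp
  _ ≤ (2*H*(N:ℝ)^2 + (H:ℝ)^2*(2*N*W + 4*H*N + 8*H^2)) / (H:ℝ)^2 := by
      exact div_le_div_of_nonneg_right main (by positivity) |>.trans_eq rfl
  _ = 2 * (N : ℝ) ^ 2 / H + 2 * N * W + 4 * H * N + 8 * H ^ 2 := by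
      field_simp
      ring

lemma vanDerCorput (a : ℕ → ℂ) (ha : ∀ n, ‖a n‖ ≤ 1)
    (hT : ∀ h : ℕ, 0 < h → Tendsto (fun N : ℕ =>
        (∑ n ∈ range N, a (n + h) * (starRingEnd ℂ) (a n)) / N) atTop (nhds 0)) :
    Tendsto (fun N : ℕ => (∑ n ∈ range N, a n) / N) atTop (nhds 0) := by
  rw [NormedAddCommGroup.tendsto_nhds_zero]
  intro ε hε
  set H : ℕ := ⌈(8:ℝ)/ε^2⌉₊ + 1 with hHdef
  have hHpos : 0 < H := Nat.succ_pos _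
  have hHr : (8:ℝ)/ε^2 < H := by
    calc (8:ℝ)/ε^2 ≤ ⌈(8:ℝ)/ε^2⌉₊ := Nat.le_ceil _
    _ < H := by exact_mod_cast Nat.lt_succ_self _
  have hHrpos : (0:ℝ) < H := by exact_mod_cast hHpos
  have hH2 : 2/(H:ℝ) < ε^2/4 := by
    rw [div_lt_div_iff₀ hHrpos (by norm_num)]
    rw [div_lt_iff₀ (by positivity)] at hHr
    linarith
  set W : ℕ → ℝ := fun N =>
    ∑ h ∈ Icc 1 (H - 1), ‖∑ n ∈ range N, a (n + h) * (starRingEnd ℂ) (a n)‖ with hWdef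
  have hWnn : ∀ N, 0 ≤ W N := fun N => Finset.sum_nonneg fun _ _ => norm_nonneg _
  have hWlim : Tendsto (fun N : ℕ => W N / N) atTop (nhds 0) := by
    have each : ∀ h ∈ Icc 1 (H - 1), Tendsto (fun N : ℕ =>
        ‖∑ n ∈ range N, a (n + h) * (starRingEnd ℂ) (a n)‖ / (N:ℝ)) atTop (nhds 0) := by
      intro h hh
      have h1 : 0 < h := (Finset.mem_Icc.mp hh).1
      have h2 := (hT h h1).norm
      rw [norm_zero] at h2
      refine h2.congr fun N => ?_
      rw [norm_div, Complex.norm_natCast]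
    have hsum := tendsto_finset_sum (Icc 1 (H - 1)) each
    rw [Finset.sum_const, smul_zero] at hsum
    refine hsum.congr fun N => ?_
    rw [hWdef]
    exact (Finset.sum_div _ _ _).symm
  -- RHS function
  set g : ℕ → ℝ := fun N => 2/(H:ℝ) + 2 * (W N) / N + 4 * H / N + 8 * H^2 / N^2 with hgdef
  have hglim : Tendsto g atTop (nhds (2/(H:ℝ))) := by
    have t1 : Tendsto (fun N : ℕ => 2 * (W N) / N) atTop (nhds 0) := by
      have := hWlim.const_mul 2
      rw [mul_zero] at this
      refine this.congr fun N => ?_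
      ring
    have t2 : Tendsto (fun N : ℕ => 4 * (H:ℝ) / N) atTop (nhds 0) :=
      tendsto_const_div_atTop_nhds_zero_nat _
    have t3 : Tendsto (fun N : ℕ => 8 * (H:ℝ)^2 / N^2) atTop (nhds 0) := by
      have h4 := (tendsto_const_div_atTop_nhds_zero_nat (8 * (H:ℝ)^2)).mul
        tendsto_one_div_atTop_nhds_zero_nat
      rw [mul_zero] at h4
      refine h4.congr fun N => ?_
      rcases Nat.eq_zero_or_pos N with h | h
      · subst h; simp
      · field_simp
    have := ((tendsto_const_nhds (x := 2/(H:ℝ))).add t1).add t2 |>.add t3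
    simpa using this
  have hev : ∀ᶠ N in atTop, g N < ε^2/2 :=
    hglim.eventually (gt_mem_nhds (by nlinarith [hε]))
  filter_upwards [hev, eventually_ge_atTop 1] with N hgN hN1
  have hNpos : (0:ℝ) < N := by exact_mod_cast hN1
  have hb : ‖(∑ n ∈ range N, a n) / N‖^2 ≤ g N := by
    have k := key_ineq a ha H N hHpos
    rw [norm_div, Complex.norm_natCast, div_pow]
    rw [div_le_iff₀ (by positivity)]
    have expand : g N * (N:ℝ)^2 = 2 * (N : ℝ) ^ 2 / H + 2 * N * (W N) + 4 * H * N + 8 * H ^ 2 := by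
      rw [hgdef]
      field_simp
    rw [expand]
    exact k
  have hlt : ‖(∑ n ∈ range N, a n) / N‖^2 < ε^2 := by
    have := lt_of_le_of_lt hb hgN
    nlinarith [hε]
  exact lt_of_pow_lt_pow_left₀ 2 hε.le hlt

lemma weyl_base (β : ℝ) (hβ : Irrational β) (Q : Polynomial ℤ) (hd : Q.natDegree = 1) :
    Tendsto (fun N : ℕ => (∑ n ∈ range N, ee (β * ((Q.eval (n:ℤ) : ℤ) : ℝ))) / N)
      atTop (nhds 0) := by
  have hQne : Q ≠ 0 := fun hq => by simp [hq] at hd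
  have hc1 : Q.coeff 1 ≠ 0 := by
    have := Polynomial.leadingCoeff_ne_zero.mpr hQne
    rwa [Polynomial.leadingCoeff, hd] at this
  have heval : ∀ n : ℤ, Q.eval n = Q.coeff 0 + Q.coeff 1 * n := by
    intro n
    rw [Polynomial.eval_eq_sum_range' (show Q.natDegree < 2 by omega)]
    simp [Finset.sum_range_succ]
  set z : ℂ := ee (β * (Q.coeff 1 : ℝ)) with hz
  have hzirr : Irrational (β * (Q.coeff 1 : ℝ)) := hβ.mul_intCast hc1
  have hz1 : z ≠ 1 := ee_ne_one hzirr
  have hterm : ∀ n : ℕ, ee (β * ((Q.eval (n:ℤ) : ℤ) : ℝ))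
      = ee (β * ((Q.coeff 0 : ℤ) : ℝ)) * z ^ n := by
    intro n
    rw [hz, ← ee_nat_mul, ← ee_add]
    congr 1
    rw [heval]
    push_cast
    ring
  have hsum : ∀ N : ℕ, (∑ n ∈ range N, ee (β * ((Q.eval (n:ℤ) : ℤ) : ℝ)))
      = ee (β * ((Q.coeff 0 : ℤ) : ℝ)) * ((z ^ N - 1) / (z - 1)) := by
    intro N
    rw [Finset.sum_congr rfl fun n _ => hterm n, ← Finset.mul_sum, geom_sum_eq hz1]
  have hbound : ∀ N : ℕ, ‖(∑ n ∈ range N, ee (β * ((Q.eval (n:ℤ) : ℤ) : ℝ))) / N‖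
      ≤ (2 / ‖z - 1‖) / N := by
    intro N
    rcases Nat.eq_zero_or_pos N with h | h
    · subst h; simp
    have hz0 : (0:ℝ) < ‖z - 1‖ := norm_pos_iff.mpr (sub_ne_zero.mpr hz1)
    have hN : (0:ℝ) < N := by exact_mod_cast h
    rw [norm_div, Complex.norm_natCast, hsum, norm_mul, norm_ee, one_mul, norm_div]
    have h2 : ‖z ^ N - 1‖ ≤ 2 := by
      calc ‖z ^ N - 1‖ ≤ ‖z ^ N‖ + ‖(1:ℂ)‖ := norm_sub_le _ _
      _ = 2 := by rw [norm_pow, norm_ee]; norm_num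
    gcongr
  exact squeeze_zero_norm hbound (tendsto_const_div_atTop_nhds_zero_nat _)

lemma weyl (β : ℝ) (hβ : Irrational β) :
    ∀ (k : ℕ) (Q : Polynomial ℤ), 0 < Q.natDegree → Q.natDegree ≤ k →
    Tendsto (fun N : ℕ => (∑ n ∈ range N, ee (β * ((Q.eval (n:ℤ) : ℤ) : ℝ))) / N)
      atTop (nhds 0) := by
  intro k
  induction k with
  | zero => intro Q h1 h2; omega
  | succ k ih =>
    intro Q h1 h2
    by_cases hd : Q.natDegree = 1
    · exact weyl_base β hβ Q hd
    · have hQne : Q ≠ 0 := fun hq => by simp [hq] at h1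
      have hlc : Q.coeff Q.natDegree ≠ 0 := by
        have := Polynomial.leadingCoeff_ne_zero.mpr hQne
        rwa [Polynomial.leadingCoeff] at this
      set d := Q.natDegree with hdd
      have hd2 : 2 ≤ d := by omega
      apply vanDerCorput _ (fun n => le_of_eq (norm_ee _))
      intro h hh
      set D : Polynomial ℤ := Polynomial.taylor (h:ℤ) Q - Q with hD
      -- coefficient at d-1
      have hcd1 : D.coeff (d - 1) = (d : ℤ) * h * Q.coeff d := by
        rw [hD, Polynomial.coeff_sub, Polynomial.taylor_coeff]
        have hH1 : (Polynomial.hasseDeriv (d-1) Q).natDegree < 2 := by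
          have := Polynomial.natDegree_hasseDeriv_le Q (d-1)
          omega
        rw [Polynomial.eval_eq_sum_range' hH1]
        rw [Finset.sum_range_succ, Finset.sum_range_succ, Finset.sum_range_zero]
        rw [Polynomial.hasseDeriv_coeff, Polynomial.hasseDeriv_coeff]
        have e0 : 0 + (d - 1) = d - 1 := by omega
        have e1 : 1 + (d - 1) = d := by omega
        rw [e0, e1, Nat.choose_self]
        have : d.choose (d - 1) = d := by
          rw [← Nat.choose_symm (by omega : d - 1 ≤ d)]
          have : d - (d - 1) = 1 := by omega
          rw [this, Nat.choose_one_right]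
        rw [this]
        push_cast
        ring
      have hcdd : D.coeff d = 0 := by
        rw [hD, Polynomial.coeff_sub, Polynomial.taylor_coeff]
        have hH0 : (Polynomial.hasseDeriv d Q).natDegree < 1 := by
          have := Polynomial.natDegree_hasseDeriv_le Q d
          omega
        rw [Polynomial.eval_eq_sum_range' hH0, Finset.sum_range_succ, Finset.sum_range_zero]
        rw [Polynomial.hasseDeriv_coeff]
        simp [Nat.choose_self]
      have hcd1ne : D.coeff (d - 1) ≠ 0 := by
        rw [hcd1]
        refine mul_ne_zero (mul_ne_zero ?_ ?_) hlc
        · exact_mod_cast (by omega : d ≠ 0)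
        · exact_mod_cast (by omega : h ≠ 0)
      have hDne : D ≠ 0 := fun h0 => hcd1ne (by rw [h0]; simp)
      have hDled : D.natDegree ≤ d := by
        refine le_trans (Polynomial.natDegree_sub_le _ _) ?_
        simp [Polynomial.natDegree_taylor, hdd]
      have hDltd : D.natDegree < d := by
        rcases lt_or_eq_of_le hDled with hlt | heq
        · exact hlt
        · exfalso
          apply hDne
          rw [← Polynomial.leadingCoeff_eq_zero, Polynomial.leadingCoeff, heq, hcdd]
      have hDge : d - 1 ≤ D.natDegree := Polynomial.le_natDegree_of_ne_zero hcd1ne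
      have lim := ih D (by omega) (by omega)
      refine lim.congr fun N => ?_
      congr 1
      refine Finset.sum_congr rfl fun n _ => ?_
      rw [conj_ee, ← ee_add]
      congr 1
      have hDeval : D.eval (n : ℤ) = Q.eval ((n : ℤ) + h) - Q.eval (n : ℤ) := by
        rw [hD, Polynomial.eval_sub, Polynomial.taylor_eval]
      rw [hDeval]
      push_cast
      ring

/-- Lemma: the sequence `v(n) = ({βP⁽¹⁾(n)}, …, {βP⁽ᶠ⁾(n)})` is equidistributed on the
relation-defined subtorus `H` with respect to Haar measure: by Weyl's criterion this means
that for every character `z ↦ e^{2πi m·z}` of `𝕋^f` which is non-trivial on `H`, the averages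
`(1/N) Σ_{n=1}^N e^{2πi m·v(n)}` tend to `0`. -/
theorem equidistributed_on_relation_subtorus (f : ℕ) (hf : 0 < f)
    (β : ℝ) (hβ : Irrational β) (P : Fin f → Polynomial ℤ)
    (hdeg : ∀ j, 0 < (P j).natDegree) (h0 : ∀ j, (P j).eval 0 = 0)
    (v : ℕ → (Fin f → UnitAddCircle))
    (hv : ∀ n j, v n j = ((β * ((P j).eval (n : ℤ) : ℤ) : ℝ) : UnitAddCircle))
    (R : Set (Fin f → ℤ)) (hR : R = {m | (∑ j, m j • P j) = 0})
    (H : Set (Fin f → UnitAddCircle))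
    (hH : H = {z | ∀ m ∈ R, (∑ j, m j • z j) = (0 : UnitAddCircle)}) :
    ∀ m : Fin f → ℤ, (∃ z ∈ H, (∑ j, m j • z j) ≠ (0 : UnitAddCircle)) →
      Tendsto (fun N : ℕ =>
          (∑ n ∈ Finset.Icc 1 N, ((AddCircle.toCircle (∑ j, m j • v n j) : Circle) : ℂ)) / N)
        atTop (nhds 0) := by
  rintro m ⟨z0, hz0H, hz0ne⟩
  set Q : Polynomial ℤ := ∑ j, m j • P j with hQ
  have hQne : Q ≠ 0 := by
    intro hq
    apply hz0ne
    rw [hH] at hz0H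
    exact hz0H m (by rw [hR]; exact hq)
  have hQ0 : Q.eval 0 = 0 := by
    rw [hQ, Polynomial.eval_finset_sum]
    refine Finset.sum_eq_zero fun j _ => ?_
    rw [zsmul_eq_mul, Polynomial.eval_mul, h0 j, mul_zero]
  have hQdeg : 0 < Q.natDegree := by
    rcases Nat.eq_zero_or_pos Q.natDegree with hz | hp
    · exfalso
      apply hQne
      have := Polynomial.eq_C_of_natDegree_eq_zero hz
      rw [Polynomial.coeff_zero_eq_eval_zero, hQ0] at this
      simpa using this
    · exact hp
  -- summand identity
  have hsummand : ∀ n : ℕ,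
      ((AddCircle.toCircle (∑ j, m j • v n j) : Circle) : ℂ)
        = ee (β * ((Q.eval (n:ℤ) : ℤ) : ℝ)) := by
    intro n
    have hsum1 : (∑ j, m j • v n j)
        = ((β * ((Q.eval (n:ℤ) : ℤ) : ℝ) : ℝ) : UnitAddCircle) := by
      have e1 : ∀ j, m j • v n j
          = ((m j • (β * ((P j).eval (n : ℤ) : ℤ)) : ℝ) : UnitAddCircle) := by
        intro j
        rw [hv n j, QuotientAddGroup.mk_zsmul]
      rw [Finset.sum_congr rfl fun j _ => e1 j]
      have e2 : (∑ j, ((m j • (β * ((P j).eval (n : ℤ) : ℤ)) : ℝ) : UnitAddCircle))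
          = ((∑ j, (m j • (β * ((P j).eval (n : ℤ) : ℤ)) : ℝ) : ℝ) : UnitAddCircle) := by
        exact (map_sum (QuotientAddGroup.mk' (AddSubgroup.zmultiples (1:ℝ)))
          (fun j => (m j • (β * ((P j).eval (n : ℤ) : ℤ)) : ℝ)) Finset.univ).symm
      rw [e2]
      congr 1
      rw [hQ, Polynomial.eval_finset_sum]
      push_cast
      rw [Finset.mul_sum]
      refine Finset.sum_congr rfl fun j _ => ?_
      have hev : Polynomial.eval (n:ℤ) (m j • P j) = m j * Polynomial.eval (n:ℤ) (P j) := by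
        rw [zsmul_eq_mul, Polynomial.eval_mul, Polynomial.eval_intCast, Int.cast_id]
      rw [hev, zsmul_eq_mul]
      push_cast
      ring
    rw [hsum1, AddCircle.toCircle_apply_mk, Circle.coe_exp, ee]
    congr 1
    push_cast
    ring
  have hIcc : ∀ N : ℕ, (∑ n ∈ Finset.Icc 1 N, ((AddCircle.toCircle (∑ j, m j • v n j) : Circle) : ℂ))
      = ∑ i ∈ range N, ee (β * (((Polynomial.taylor (1:ℤ) Q).eval (i:ℤ) : ℤ) : ℝ)) := by
    intro N
    rw [Finset.sum_congr rfl fun n _ => hsummand n]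
    rw [← Finset.Ico_add_one_right_eq_Icc, Finset.sum_Ico_eq_sum_range]
    simp only [Nat.succ_sub_one, Nat.add_sub_cancel]
    refine Finset.sum_congr rfl fun i _ => ?_
    rw [Polynomial.taylor_eval]
    congr 2
    push_cast
    ring
  have hQ' : (Polynomial.taylor (1:ℤ) Q).natDegree = Q.natDegree := Polynomial.natDegree_taylor _ _
  have lim := weyl β hβ Q.natDegree (Polynomial.taylor (1:ℤ) Q) (by omega) (by omega)
  refine lim.congr fun N => ?_
  rw [hIcc N]
end

section
/- Let U ⊆ 𝔽_q². Then Σ_{v ≠ 0} Σ_{λ ∈ 𝔽_q} |U ∩ ℓ_{v,λ}|² = (q−1)|U|(|U| + q), where the outer sum is over nonzero v ∈ 𝔽_q² and ℓ_{v,λ} = {p ∈ 𝔽_q² : p·v = λ}. -/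
open Finset

/-- Cardinality of the kernel line `{v : a v₁ + b v₂ = 0}` for `(a,b) ≠ 0`. -/
lemma ker_card_aux {F : Type*} [Field F] [Fintype F] [DecidableEq F] (a b : F)
    (h : ¬(a = 0 ∧ b = 0)) :
    (Finset.univ.filter (fun v : F × F => a * v.1 + b * v.2 = 0)).card = Fintype.card F := by
  by_cases ha : a = 0
  · have hb : b ≠ 0 := fun hb => h ⟨ha, hb⟩
    subst ha
    rw [← Finset.card_univ]
    refine Finset.card_bij' (fun v _ => v.1) (fun t _ => (t, 0)) ?_ ?_ ?_ ?_
    · intro v hv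
      simp
    · intro t _
      simp
    · intro v hv
      simp only [Finset.mem_filter, Finset.mem_univ, true_and, zero_mul, zero_add] at hv
      have h2 : v.2 = 0 := by
        rcases mul_eq_zero.mp hv with h' | h'
        · exact absurd h' hb
        · exact h'
      simp [Prod.ext_iff, h2]
    · intro t _
      rfl
  · rw [← Finset.card_univ]
    apply Finset.card_bij' (fun v _ => v.2) (fun t _ => (-(b * t) / a, t))
    · intro v hv
      simp
    · intro t _
      simp only [Finset.mem_filter, Finset.mem_univ, true_and]
      field_simp
      ring
    · intro v hv
      simp only [Finset.mem_filter, Finset.mem_univ, true_and] at hv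
      have : v.1 = -(b * v.2) / a := by
        field_simp
        linear_combination hv
      exact Prod.ext this.symm rfl
    · intro t _
      rfl

/-- The number of nonzero `v` with `p ⬝ v = p' ⬝ v`. -/
lemma pair_count_aux {F : Type*} [Field F] [Fintype F] [DecidableEq F] (p p' : F × F) :
    (∑ v ∈ Finset.univ.filter (fun v : F × F => v ≠ 0),
        if p.1 * v.1 + p.2 * v.2 = p'.1 * v.1 + p'.2 * v.2 then 1 else 0)
      = (Fintype.card F - 1) +
        if p = p' then Fintype.card F * Fintype.card F - Fintype.card F else 0 := by
  classical
  have hq2 : 2 ≤ Fintype.card F := Fintype.one_lt_card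
  rw [← Finset.card_filter]
  rw [Finset.filter_filter]
  by_cases hpp : p = p'
  · subst hpp
    rw [if_pos rfl]
    have : Finset.univ.filter (fun v : F × F =>
        v ≠ 0 ∧ p.1 * v.1 + p.2 * v.2 = p.1 * v.1 + p.2 * v.2)
        = (Finset.univ : Finset (F × F)).erase 0 := by
      ext v
      simp
    rw [this, Finset.card_erase_of_mem (Finset.mem_univ _),
      Finset.card_univ, Fintype.card_prod]
    have h3 : Fintype.card F ≤ Fintype.card F * Fintype.card F :=
      Nat.le_mul_of_pos_left _ (by omega)
    omega
  · rw [if_neg hpp, add_zero]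
    set a := p.1 - p'.1 with hadef
    set b := p.2 - p'.2 with hbdef
    have hab : ¬(a = 0 ∧ b = 0) := by
      rintro ⟨h1, h2⟩
      apply hpp
      have e1 : p.1 = p'.1 := by rw [hadef] at h1; linear_combination h1
      have e2 : p.2 = p'.2 := by rw [hbdef] at h2; linear_combination h2
      exact Prod.ext e1 e2
    have hcond : ∀ v : F × F,
        (p.1 * v.1 + p.2 * v.2 = p'.1 * v.1 + p'.2 * v.2) ↔ (a * v.1 + b * v.2 = 0) := by
      intro v
      constructor
      · intro h; rw [hadef, hbdef]; linear_combination h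
      · intro h; linear_combination h
    have : Finset.univ.filter (fun v : F × F =>
        v ≠ 0 ∧ p.1 * v.1 + p.2 * v.2 = p'.1 * v.1 + p'.2 * v.2)
        = (Finset.univ.filter (fun v : F × F => a * v.1 + b * v.2 = 0)).erase 0 := by
      ext v
      simp [hcond v, and_comm]
    rw [this, Finset.card_erase_of_mem (by simp), ker_card_aux a b hab]

/-- Second-moment identity for lines: for `U ⊆ 𝔽_q²`,
`Σ_{v ≠ 0} Σ_{λ} |U ∩ ℓ_{v,λ}|² = (q−1)|U|(|U|+q)`. -/
theorem line_second_moment (F : Type*) [Field F] [Fintype F] [DecidableEq F]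
    (U : Finset (F × F)) :
    ∑ v ∈ Finset.univ.filter (fun v : F × F => v ≠ 0), ∑ lam : F,
        ((U.filter (fun p => p.1 * v.1 + p.2 * v.2 = lam)).card) ^ 2 =
      (Fintype.card F - 1) * U.card * (U.card + Fintype.card F) := by
  set q := Fintype.card F with hq
  have hq2 : 2 ≤ q := Fintype.one_lt_card
  -- Step 1: rewrite the inner sum as a pair count
  have step1 : ∀ v : F × F,
      (∑ lam : F, ((U.filter (fun p => p.1 * v.1 + p.2 * v.2 = lam)).card) ^ 2)
      = ∑ p ∈ U, ∑ p' ∈ U,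
          if p.1 * v.1 + p.2 * v.2 = p'.1 * v.1 + p'.2 * v.2 then 1 else 0 := by
    intro v
    simp only [Finset.card_filter, sq, Finset.sum_mul_sum]
    rw [Finset.sum_comm]
    refine Finset.sum_congr rfl fun p _ => ?_
    rw [Finset.sum_comm]
    refine Finset.sum_congr rfl fun p' _ => ?_
    simp only [ite_mul, one_mul, zero_mul]
    rw [Finset.sum_ite_eq]
    simp [eq_comm]
  simp only [step1]
  rw [Finset.sum_comm]
  have step2 : ∀ p ∈ U,
      (∑ v ∈ Finset.univ.filter (fun v : F × F => v ≠ 0), ∑ p' ∈ U,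
        if p.1 * v.1 + p.2 * v.2 = p'.1 * v.1 + p'.2 * v.2 then 1 else 0)
      = U.card * (q - 1) + (q * q - q) := by
    intro p hp
    rw [Finset.sum_comm]
    have : ∀ p' ∈ U,
        (∑ v ∈ Finset.univ.filter (fun v : F × F => v ≠ 0),
          if p.1 * v.1 + p.2 * v.2 = p'.1 * v.1 + p'.2 * v.2 then 1 else 0)
        = (q - 1) + if p = p' then q * q - q else 0 := fun p' _ => pair_count_aux p p'
    rw [Finset.sum_congr rfl this, Finset.sum_add_distrib, Finset.sum_const, smul_eq_mul,
      Finset.sum_ite_eq, if_pos hp]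
  rw [Finset.sum_congr rfl step2, Finset.sum_const, smul_eq_mul]
  have h1 : q * q - q = q * (q - 1) := by
    rw [Nat.mul_sub, Nat.mul_one]
  rw [h1]
  generalize (q - 1) = r
  ring
end

section
/- For all r, t ∈ ℕ there are constants α = α(r,t) > 0 (one may take α ≥ 2/((1 + t·2^{r+3})^r − 1)) and N_0 = N_0(r,t) such that for every N ≥ N_0 there is a partition ℤ_N = E_1 ∪ ⋯ ∪ E_r with the property: for every coloring ℤ_N = F_1 ∪ ⋯ ∪ F_t with t colors, there exist a single color class F_m and an element h ∈ ℤ_N such that |(F_m + h) ∩ E_i| ≥ αN for every i = 1, …, r. -/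
open Finset

/-- number of elements of `ZMod N` whose val is in the top `d` window is at most `d` -/
lemma raimi_unsafe_card (N d : ℕ) [NeZero N] (S : Finset (ZMod N)) :
    (S.filter (fun x => N ≤ x.val + d)).card ≤ d := by
  classical
  calc (S.filter (fun x => N ≤ x.val + d)).card
      ≤ (Finset.range d).card := by
        apply Finset.card_le_card_of_injOn (fun x => x.val + d - N)
        · intro x hx
          simp only [mem_coe, mem_filter] at hx
          have := ZMod.val_lt x
          simp only [Finset.mem_coe, Finset.mem_range]
          omega
        · intro x hx y hy hxy
          simp only [coe_filter, Set.mem_setOf_eq] at hx hy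
          simp only at hxy
          have h1 := ZMod.val_lt x
          have h2 := ZMod.val_lt y
          apply ZMod.val_injective
          omega
    _ = d := Finset.card_range d

/-- upper bound on the number of elements with `e ∣ val` -/
lemma raimi_divset_card (N e : ℕ) [NeZero N] (he : 0 < e) :
    ((Finset.univ.filter (fun x : ZMod N => e ∣ x.val)).card ≤ N / e + 1) := by
  classical
  calc (Finset.univ.filter (fun x : ZMod N => e ∣ x.val)).card
      ≤ (Finset.range (N / e + 1)).card := by
        apply Finset.card_le_card_of_injOn (fun x => x.val / e)
        · intro x hx
          have := ZMod.val_lt x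
          simp only [Finset.mem_coe, Finset.mem_range]
          have : x.val / e ≤ N / e := Nat.div_le_div_right (le_of_lt this)
          omega
        · intro x hx y hy hxy
          simp only [coe_filter, Set.mem_setOf_eq] at hx hy
          apply ZMod.val_injective
          have hx' := Nat.div_mul_cancel hx.2
          have hy' := Nat.div_mul_cancel hy.2
          simp only at hxy
          rw [← hx', ← hy', hxy]
    _ = N / e + 1 := Finset.card_range _

/-- preservation: shifting by a multiple of `e` loses at most `d` elements from the
divisibility class -/
lemma raimi_preserve (N e d : ℕ) [NeZero N] (hdN : d < N) (hed : e ∣ d)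
    (S : Finset (ZMod N)) :
    (S.filter (fun x => e ∣ x.val)).card ≤
      ((S.image (fun x => x + (d : ZMod N))).filter (fun x => e ∣ x.val)).card + d := by
  classical
  have hinj : Function.Injective (fun x : ZMod N => x + (d : ZMod N)) :=
    add_left_injective _
  rw [Finset.filter_image, Finset.card_image_of_injective _ hinj]
  have hdval : ((d : ℕ) : ZMod N).val = d := ZMod.val_cast_of_lt hdN
  -- split by safety
  have hsplit := Finset.card_filter_add_card_filter_not
    (s := S.filter (fun x => e ∣ x.val)) (p := fun x : ZMod N => x.val + d < N)
  have h1 : ((S.filter (fun x => e ∣ x.val)).filter (fun x : ZMod N => x.val + d < N)).card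
      ≤ (S.filter (fun a => e ∣ (a + (d : ZMod N)).val)).card := by
    apply Finset.card_le_card
    intro x hx
    simp only [mem_filter] at hx ⊢
    obtain ⟨⟨hxS, hxd⟩, hsafe⟩ := hx
    refine ⟨hxS, ?_⟩
    have : (x + (d : ZMod N)).val = x.val + d := by
      rw [ZMod.val_add, hdval, Nat.mod_eq_of_lt hsafe]
    rw [this]
    exact Nat.dvd_add hxd hed
  have h2 : ((S.filter (fun x => e ∣ x.val)).filter (fun x : ZMod N => ¬ x.val + d < N)).card
      ≤ d := by
    calc _ ≤ ((S.filter (fun x => e ∣ x.val)).filter (fun x : ZMod N => N ≤ x.val + d)).card := by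
            apply Finset.card_le_card
            intro x hx
            simp only [mem_filter] at hx ⊢
            exact ⟨hx.1, by omega⟩
    _ ≤ d := raimi_unsafe_card N d _
  omega

open Finset

/-- stage lemma: some shift by a multiple `c*e`, `c < K`, pushes at least a `1/K` fraction
(minus boundary error `K*e`) of `S` into the divisibility class of `K*e`. -/
lemma raimi_stage (N K e : ℕ) [NeZero N] (hK : 0 < K) (heN : K * e < N) (he : 0 < e)
    (S : Finset (ZMod N)) (hS : ∀ x ∈ S, e ∣ x.val) :
    ∃ c < K, S.card ≤ K * (((S.image (fun x => x + ((c * e : ℕ) : ZMod N))).filter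
      (fun x => (K * e) ∣ x.val)).card) + K * e := by
  classical
  set T : ℕ → ℕ := fun c => (S.filter (fun x => (K * e) ∣ (x + ((c * e : ℕ) : ZMod N)).val)).card with hT
  have hTeq : ∀ c, ((S.image (fun x => x + ((c * e : ℕ) : ZMod N))).filter
      (fun x => (K * e) ∣ x.val)).card = T c := by
    intro c
    rw [Finset.filter_image, Finset.card_image_of_injective _ (add_left_injective _)]
  -- sum lower bound
  have hsum : S.card ≤ (∑ c ∈ Finset.range K, T c) + K * e := by
    have hswap : (∑ c ∈ Finset.range K, T c)
        = ∑ x ∈ S, ((Finset.range K).filter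
            (fun c => (K * e) ∣ (x + ((c * e : ℕ) : ZMod N)).val)).card := by
      simp only [hT, Finset.card_filter]
      rw [Finset.sum_comm]
    -- each safe x contributes at least 1
    have hsafe : ∀ x ∈ S.filter (fun x : ZMod N => x.val + K * e < N),
        1 ≤ ((Finset.range K).filter
            (fun c => (K * e) ∣ (x + ((c * e : ℕ) : ZMod N)).val)).card := by
      intro x hx
      simp only [mem_filter] at hx
      obtain ⟨hxS, hxsafe⟩ := hx
      obtain ⟨m, hm⟩ := hS x hxS
      -- choose c
      set q := m % K with hq
      set a := m / K with ha
      have hdm : K * a + q = m := Nat.div_add_mod m K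
      have hqK : q < K := Nat.mod_lt _ hK
      set c : ℕ := if q = 0 then 0 else K - q with hc
      have hcK : c < K := by
        simp only [hc]; split <;> omega
      have hdvd : K ∣ m + c := by
        rcases eq_or_ne q 0 with h0 | h0
        · refine ⟨a, ?_⟩
          simp only [hc, if_pos h0]
          rw [← hdm, h0]
          ring
        · refine ⟨a + 1, ?_⟩
          simp only [hc, if_neg h0]
          have h1 : q + (K - q) = K := by omega
          calc m + (K - q) = K * a + (q + (K - q)) := by rw [← hdm, add_assoc]
            _ = K * a + K := by rw [h1]
            _ = K * (a + 1) := by ring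
      have hce : c * e < N := lt_of_le_of_lt
        (by exact Nat.mul_le_mul_right e (le_of_lt hcK)) (by nlinarith)
      have hceval : (((c * e : ℕ) : ZMod N)).val = c * e := ZMod.val_cast_of_lt hce
      have hvx : (x + ((c * e : ℕ) : ZMod N)).val = x.val + c * e := by
        rw [ZMod.val_add, hceval, Nat.mod_eq_of_lt]
        have : c * e ≤ K * e := Nat.mul_le_mul_right e (le_of_lt hcK)
        omega
      have : ((Finset.range K).filter
          (fun c => (K * e) ∣ (x + ((c * e : ℕ) : ZMod N)).val)).Nonempty := by
        refine ⟨c, ?_⟩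
        simp only [mem_filter, Finset.mem_range]
        refine ⟨hcK, ?_⟩
        rw [hvx, hm]
        obtain ⟨u, hu⟩ := hdvd
        exact ⟨u, by rw [show e * m + c * e = e * (m + c) from by ring, hu]; ring⟩
      exact Finset.card_pos.mpr this
    have hlow : (S.filter (fun x : ZMod N => x.val + K * e < N)).card
        ≤ ∑ c ∈ Finset.range K, T c := by
      rw [hswap]
      calc (S.filter (fun x : ZMod N => x.val + K * e < N)).card
          = ∑ x ∈ S.filter (fun x : ZMod N => x.val + K * e < N), 1 := by
            simp
        _ ≤ ∑ x ∈ S.filter (fun x : ZMod N => x.val + K * e < N),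
              ((Finset.range K).filter
                (fun c => (K * e) ∣ (x + ((c * e : ℕ) : ZMod N)).val)).card :=
            Finset.sum_le_sum hsafe
        _ ≤ ∑ x ∈ S, ((Finset.range K).filter
              (fun c => (K * e) ∣ (x + ((c * e : ℕ) : ZMod N)).val)).card :=
            Finset.sum_le_sum_of_subset (Finset.filter_subset _ _)
    have hunsafe : (S.filter (fun x : ZMod N => ¬ x.val + K * e < N)).card ≤ K * e := by
      calc _ ≤ (S.filter (fun x : ZMod N => N ≤ x.val + K * e)).card := by
              apply Finset.card_le_card
              intro x hx
              simp only [mem_filter] at hx ⊢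
              exact ⟨hx.1, by omega⟩
        _ ≤ K * e := raimi_unsafe_card N (K * e) S
    have := Finset.card_filter_add_card_filter_not
      (s := S) (p := fun x : ZMod N => x.val + K * e < N)
    omega
  -- pick the max c
  obtain ⟨c, hcmem, hcmax⟩ := Finset.exists_max_image (Finset.range K) T ⟨0, by
    simpa using hK⟩
  refine ⟨c, Finset.mem_range.mp hcmem, ?_⟩
  rw [hTeq]
  have : (∑ c' ∈ Finset.range K, T c') ≤ K * T c := by
    calc (∑ c' ∈ Finset.range K, T c') ≤ (Finset.range K).card • T c :=
          Finset.sum_le_card_nsmul _ _ _ (fun c' hc' => hcmax c' hc')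
      _ = K * T c := by simp [Finset.card_range, smul_eq_mul]
  omega


lemma raimi_arith (r t K N v : ℕ) (hr : 1 ≤ r) (ht : 1 ≤ t)
    (hK : K = 1 + t * 2^(r+3)) (hv : v + 1 ≤ r) (hN : (r+1) * K^(2*r+2) ≤ N) :
    2 / ((K:ℝ)^r - 1) * N + ((N:ℝ)/(K:ℝ)^(v+1) + 1) + r * (K:ℝ)^(r+1)
      ≤ (N:ℝ) / ((t:ℝ) * (K:ℝ)^v) := by
  have hK16 : (16:ℝ) * t ≤ K := by
    have h16 : (16:ℕ) ≤ 2^(r+3) := by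
      calc (16:ℕ) = 2^4 := rfl
        _ ≤ 2^(r+3) := Nat.pow_le_pow_right (by norm_num) (by omega)
    have : 16 * t ≤ K := by
      calc 16 * t = t * 16 := by ring
        _ ≤ t * 2^(r+3) := Nat.mul_le_mul_left t h16
        _ ≤ K := by omega
    exact_mod_cast this
  have ht1 : (1:ℝ) ≤ t := by exact_mod_cast ht
  have hK2 : (2:ℝ) ≤ K := by nlinarith
  have hKpos : (0:ℝ) < K := by linarith
  have hK1 : (1:ℝ) ≤ K := by linarith
  have hNpos : (0:ℝ) ≤ N := Nat.cast_nonneg N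
  have hD2 : (2:ℝ) ≤ (K:ℝ)^r := le_trans hK2 (le_self_pow₀ (by linarith) (by omega))
  have hDpos : (0:ℝ) < (K:ℝ)^r - 1 := by linarith
  have hNR : ((r:ℝ)+1) * (K:ℝ)^(2*r+2) ≤ N := by exact_mod_cast hN
  have hrR : (1:ℝ) ≤ r := by exact_mod_cast hr
  have s1 : 2 / ((K:ℝ)^r - 1) * N ≤ 4 * ((N:ℝ) / (K:ℝ)^r) := by
    rw [← mul_div_assoc, div_mul_eq_mul_div, div_le_div_iff₀ hDpos (by positivity)]
    nlinarith [hD2, hNpos]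
  have hsplit : (K:ℝ)^(2*r+2) = (K:ℝ)^r * (K:ℝ)^(r+2) := by
    rw [← pow_add]
    congr 1
    omega
  have h1 : (1:ℝ) ≤ (K:ℝ)^(r+2) := one_le_pow₀ hK1
  have h2 : (K:ℝ)^(r+1) ≤ (K:ℝ)^(r+2) := pow_le_pow_right₀ hK1 (by omega)
  have s2 : 1 + (r:ℝ) * (K:ℝ)^(r+1) ≤ 4 * ((N:ℝ) / (K:ℝ)^r) := by
    rw [← mul_div_assoc, le_div_iff₀ (by positivity)]
    have g1 : (1 + (r:ℝ)*(K:ℝ)^(r+1)) ≤ ((r:ℝ)+1)*(K:ℝ)^(r+2) := by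
      nlinarith [mul_le_mul_of_nonneg_left h2 (by linarith : (0:ℝ) ≤ (r:ℝ))]
    have g2 : (1 + (r:ℝ)*(K:ℝ)^(r+1)) * (K:ℝ)^r ≤ (((r:ℝ)+1)*(K:ℝ)^(r+2)) * (K:ℝ)^r :=
      mul_le_mul_of_nonneg_right g1 (by positivity)
    calc (1 + (r:ℝ)*(K:ℝ)^(r+1)) * (K:ℝ)^r ≤ (((r:ℝ)+1)*(K:ℝ)^(r+2)) * (K:ℝ)^r := g2
      _ = ((r:ℝ)+1) * (K:ℝ)^(2*r+2) := by rw [hsplit]; ring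
      _ ≤ N := hNR
      _ ≤ 4 * N := by linarith
  have s3 : (N:ℝ) / (K:ℝ)^r ≤ (N:ℝ) / (K:ℝ)^(v+1) := by
    have hpow : (K:ℝ)^(v+1) ≤ (K:ℝ)^r := pow_le_pow_right₀ hK1 (by omega)
    exact div_le_div_of_nonneg_left hNpos (by positivity) hpow
  have s4 : 9 * ((N:ℝ) / (K:ℝ)^(v+1)) ≤ (N:ℝ) / ((t:ℝ)*(K:ℝ)^v) := by
    rw [← mul_div_assoc, div_le_div_iff₀ (by positivity) (by positivity)]
    have hp : (0:ℝ) ≤ (N:ℝ)*(K:ℝ)^v := by positivity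
    have h9 : (9:ℝ)*t ≤ K := by linarith
    calc 9*(N:ℝ)*((t:ℝ)*(K:ℝ)^v) = (9*(t:ℝ))*((N:ℝ)*(K:ℝ)^v) := by ring
      _ ≤ K*((N:ℝ)*(K:ℝ)^v) := mul_le_mul_of_nonneg_right h9 hp
      _ = (N:ℝ)*(K:ℝ)^(v+1) := by rw [pow_succ]; ring
  linarith [s1, s2, s3, s4]

set_option maxHeartbeats 1000000 in

/-- Theorem 1.4 (cyclic case): for all `r, t ≥ 1` there are `α = α(r,t) > 0` (one may take
`α ≥ 2/((1+t·2^{r+3})^r − 1)`) and `N₀` such that for every `N ≥ N₀` there is a partition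
`ℤ_N = E₁ ∪ ⋯ ∪ E_r` with: for every `t`-coloring `ℤ_N = F₁ ∪ ⋯ ∪ F_t` there are a color
class `F_m` and `h ∈ ℤ_N` with `|(F_m + h) ∩ E_i| ≥ αN` for all `i`. -/
theorem raimi_cyclic (r t : ℕ) (hr : 0 < r) (ht : 0 < t) :
    ∃ α : ℝ, 0 < α ∧ 2 / (((1 + t * 2 ^ (r + 3) : ℝ)) ^ r - 1) ≤ α ∧
      ∃ N₀ : ℕ, ∀ N : ℕ, N₀ ≤ N →
        ∃ E : Fin r → Finset (ZMod N), (∀ x : ZMod N, ∃! i, x ∈ E i) ∧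
          ∀ F : Fin t → Finset (ZMod N), (∀ x : ZMod N, ∃! m, x ∈ F m) →
            ∃ (m : Fin t) (h : ZMod N), ∀ i : Fin r,
              α * N ≤ (((F m).image (fun x => x + h)) ∩ E i).card := by
  classical
  set K : ℕ := 1 + t * 2^(r+3) with hKdef
  have hK2 : 2 ≤ K := by
    have : 1 ≤ t * 2^(r+3) := Nat.one_le_iff_ne_zero.mpr (by positivity)
    omega
  have hKR : (2:ℝ) ≤ (K:ℝ) := by exact_mod_cast hK2
  have hKcast : ((K:ℕ):ℝ) = 1 + (t:ℝ) * 2^(r+3) := by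
    rw [hKdef]; push_cast; ring
  have hD2 : (2:ℝ) ≤ (K:ℝ)^r := le_trans hKR (le_self_pow₀ (by linarith) (by omega))
  have hDpos : (0:ℝ) < (K:ℝ)^r - 1 := by linarith
  refine ⟨2 / ((K:ℝ)^r - 1), by positivity, by rw [hKcast], (r+1) * K^(2*r+2), ?_⟩
  intro N hN
  have hN1 : 1 ≤ N := by
    have h0 : 0 < (r+1) * K^(2*r+2) := Nat.mul_pos (by omega) (Nat.pow_pos (by omega))
    omega
  haveI : NeZero N := ⟨by omega⟩
  have hKrN : K^(r+1) < N := by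
    calc K^(r+1) < K^(2*r+2) := Nat.pow_lt_pow_right (by omega) (by omega)
      _ ≤ (r+1) * K^(2*r+2) := Nat.le_mul_of_pos_left _ (by omega)
      _ ≤ N := hN
  -- the partition
  set A : ℕ → Finset (ZMod N) := fun j => Finset.univ.filter (fun x => K^j ∣ x.val) with hA
  set E : Fin r → Finset (ZMod N) :=
    fun i => if ((i:ℕ)+1 < r) then A i \ A ((i:ℕ)+1) else A i with hE
  have hpart : ∀ x : ZMod N, ∃! i, x ∈ E i := by
    intro x
    set mx := Nat.findGreatest (fun j => K^j ∣ x.val) (r-1) with hmx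
    have hmle : mx ≤ r - 1 := Nat.findGreatest_le _
    have hmdvd : K^mx ∣ x.val := by
      have := Nat.findGreatest_spec (P := fun j => K^j ∣ x.val) (n := r-1) (m := 0)
        (Nat.zero_le _) (by simp)
      rwa [← hmx] at this
    refine ⟨⟨mx, by omega⟩, ?_, ?_⟩
    · show x ∈ E ⟨mx, by omega⟩
      rw [hE]
      simp only
      by_cases hcase : mx + 1 < r
      · rw [if_pos hcase]
        apply Finset.mem_sdiff.mpr
        refine ⟨Finset.mem_filter.mpr ⟨Finset.mem_univ _, hmdvd⟩, ?_⟩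
        intro hmem
        have hdvd' := (Finset.mem_filter.mp hmem).2
        refine Nat.findGreatest_is_greatest (P := fun j => K^j ∣ x.val) (n := r-1)
          (k := mx + 1) (by omega) (by omega) ?_
        exact hdvd'
      · rw [if_neg hcase]
        exact Finset.mem_filter.mpr ⟨Finset.mem_univ _, hmdvd⟩
    · intro i hi
      apply Fin.ext
      show (i:ℕ) = mx
      rw [hE] at hi
      simp only at hi
      by_cases hcase : (i:ℕ) + 1 < r
      · rw [if_pos hcase] at hi
        obtain ⟨hiA, hiA'⟩ := Finset.mem_sdiff.mp hi
        have h1 : (i:ℕ) ≤ mx := by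
          have := Nat.le_findGreatest (P := fun j => K^j ∣ x.val) (n := r-1) (m := (i:ℕ))
            (by omega) ((Finset.mem_filter.mp hiA).2)
          rwa [← hmx] at this
        have h2 : mx ≤ (i:ℕ) := by
          by_contra hgt
          exact hiA' (Finset.mem_filter.mpr ⟨Finset.mem_univ _,
            dvd_trans (pow_dvd_pow K (by omega)) hmdvd⟩)
        omega
      · rw [if_neg hcase] at hi
        have hieq : (i:ℕ) = r - 1 := by have := i.isLt; omega
        have h1 : r - 1 ≤ mx := by
          have := Nat.le_findGreatest (P := fun j => K^j ∣ x.val) (n := r-1) (m := r-1)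
            le_rfl (by rw [← hieq]; exact (Finset.mem_filter.mp hi).2)
          rwa [← hmx] at this
        omega
  refine ⟨E, hpart, ?_⟩
  intro F hF
  -- largest colour class
  obtain ⟨m, hmmem, hmax⟩ := Finset.exists_max_image Finset.univ (fun m' => (F m').card)
    ⟨⟨0, ht⟩, Finset.mem_univ _⟩
  have hFm : N ≤ t * (F m).card := by
    have hcover : (Finset.univ : Finset (ZMod N)) ⊆ Finset.univ.biUnion F := by
      intro x _
      obtain ⟨mx, hmx, -⟩ := hF x
      exact Finset.mem_biUnion.mpr ⟨mx, Finset.mem_univ _, hmx⟩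
    have h1 : N ≤ ∑ m' : Fin t, (F m').card := by
      calc N = (Finset.univ : Finset (ZMod N)).card := by rw [Finset.card_univ, ZMod.card]
        _ ≤ (Finset.univ.biUnion F).card := Finset.card_le_card hcover
        _ ≤ ∑ m' : Fin t, (F m').card := Finset.card_biUnion_le
    have h2 : ∑ m' : Fin t, (F m').card ≤ t * (F m).card := by
      calc ∑ m' : Fin t, (F m').card ≤ (Finset.univ : Finset (Fin t)).card • (F m).card :=
            Finset.sum_le_card_nsmul _ _ _ (fun m' hm' => hmax m' hm')
        _ = t * (F m).card := by rw [Finset.card_univ, Fintype.card_fin, smul_eq_mul]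
    omega
  have htR : (0:ℝ) < t := by exact_mod_cast ht
  have hKposR : (0:ℝ) < K := by linarith
  -- iterated shift selection
  have claim : ∀ j, j < r → ∃ H : ZMod N, ∀ i, i ≤ j →
      (N:ℝ)/((t:ℝ)*(K:ℝ)^i) - (j:ℝ)*(K:ℝ)^(r+1)
        ≤ (((F m).image (fun x => x + H)).filter (fun x => K^i ∣ x.val)).card := by
    intro j
    induction j with
    | zero =>
      intro _
      refine ⟨0, ?_⟩
      intro i hi
      have hi0 : i = 0 := Nat.le_zero.mp hi
      subst hi0
      have himg : (F m).image (fun x => x + (0 : ZMod N)) = F m := by simp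
      rw [himg]
      have hfilt : (F m).filter (fun x => K^0 ∣ x.val) = F m :=
        Finset.filter_true_of_mem (fun x _ => by simp)
      rw [hfilt]
      have hcard : (N:ℝ) ≤ (t:ℝ) * ((F m).card : ℝ) := by exact_mod_cast hFm
      rw [pow_zero, mul_one]
      have : (N:ℝ)/(t:ℝ) ≤ ((F m).card : ℝ) := by
        rw [div_le_iff₀ htR]; linarith
      push_cast
      linarith
    | succ j ih =>
      intro hjr
      obtain ⟨H, hH⟩ := ih (by omega)
      set X := (F m).image (fun x => x + H) with hX
      set Sj := X.filter (fun x => K^j ∣ x.val) with hSj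
      have hKKj : K * K^j = K^(j+1) := by rw [pow_succ, mul_comm]
      have hKjN : K * K^j < N := by
        rw [hKKj]
        calc K^(j+1) ≤ K^(r+1) := Nat.pow_le_pow_right (by omega) (by omega)
          _ < N := hKrN
      obtain ⟨c, hcK, hineq⟩ := raimi_stage N K (K^j) (by omega) hKjN
        (Nat.pow_pos (by omega)) Sj (fun x hx => (Finset.mem_filter.mp hx).2)
      set δ : ZMod N := ((c * K^j : ℕ) : ZMod N) with hδ
      have hdN : c * K^j < N := by
        calc c * K^j ≤ K * K^j := Nat.mul_le_mul_right _ (le_of_lt hcK)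
          _ < N := hKjN
      have hdr : c * K^j ≤ K^(r+1) := by
        calc c * K^j ≤ K * K^j := Nat.mul_le_mul_right _ (le_of_lt hcK)
          _ = K^(j+1) := hKKj
          _ ≤ K^(r+1) := Nat.pow_le_pow_right (by omega) (by omega)
      have himg2 : X.image (fun x => x + δ) = (F m).image (fun x => x + (H + δ)) := by
        rw [hX, Finset.image_image]
        congr 1
        funext x
        simp [add_assoc]
      refine ⟨H + δ, ?_⟩
      intro i hi
      rcases Nat.lt_or_ge i (j+1) with hij | hij
      · -- preservation of earlier levels
        have hold := hH i (by omega)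
        have hpres := raimi_preserve N (K^i) (c * K^j) hdN
          (Dvd.dvd.mul_left (pow_dvd_pow K (by omega)) c) X
        rw [himg2] at hpres
        have hdrR : ((c * K^j : ℕ) : ℝ) ≤ (K:ℝ)^(r+1) := by exact_mod_cast hdr
        have hpresR : ((X.filter (fun x => K^i ∣ x.val)).card : ℝ)
            ≤ (((F m).image (fun x => x + (H + δ))).filter (fun x => K^i ∣ x.val)).card
              + ((c * K^j : ℕ) : ℝ) := by exact_mod_cast hpres
        push_cast
        push_cast at hold
        linarith
      · have hi' : i = j + 1 := by omega
        subst hi'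
        have hold := hH j le_rfl
        have hsub : (Sj.image (fun x => x + δ)).filter (fun x => K * K^j ∣ x.val)
            ⊆ ((F m).image (fun x => x + (H + δ))).filter (fun x => K^(j+1) ∣ x.val) := by
          intro x hx
          obtain ⟨hx1, hx2⟩ := Finset.mem_filter.mp hx
          refine Finset.mem_filter.mpr ⟨?_, by rwa [← hKKj]⟩
          rw [← himg2]
          exact Finset.image_subset_image (Finset.filter_subset _ _) hx1
        have hTle := Finset.card_le_card hsub
        -- cast everything to ℝ
        have hineqR : (Sj.card : ℝ) ≤ (K:ℝ) *
            ((((F m).image (fun x => x + (H + δ))).filter (fun x => K^(j+1) ∣ x.val)).card : ℝ)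
              + (K:ℝ) * (K:ℝ)^j := by
          have h1 : Sj.card ≤ K * (((F m).image (fun x => x + (H + δ))).filter
              (fun x => K^(j+1) ∣ x.val)).card + K * K^j :=
            le_trans hineq (by
              have := Nat.mul_le_mul_left K hTle
              omega)
          exact_mod_cast h1
        have holdR : (N:ℝ)/((t:ℝ)*(K:ℝ)^j) - (j:ℝ)*(K:ℝ)^(r+1) ≤ (Sj.card : ℝ) := hold
        -- multiply target by K
        have hKdiv : (K:ℝ) * ((N:ℝ)/((t:ℝ)*(K:ℝ)^(j+1))) = (N:ℝ)/((t:ℝ)*(K:ℝ)^j) := by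
          rw [pow_succ]
          field_simp
        have hKj_le : (K:ℝ)*(K:ℝ)^j ≤ (K:ℝ)^(r+1) := by
          have : (K:ℝ)^(j+1) ≤ (K:ℝ)^(r+1) :=
            pow_le_pow_right₀ (by linarith) (by omega)
          rw [pow_succ] at this
          linarith [this]
        have hKge1 : (1:ℝ) ≤ (K:ℝ) := by linarith
        set km : ℝ := ((((F m).image (fun x => x + (H + δ))).filter
          (fun x => K^(j+1) ∣ x.val)).card : ℝ) with hkm
        have hgoal : (K:ℝ) * ((N:ℝ)/((t:ℝ)*(K:ℝ)^(j+1)) - ((j:ℝ)+1)*(K:ℝ)^(r+1)) ≤ (K:ℝ) * km := by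
          rw [mul_sub, hKdiv]
          have e1 : (K:ℝ) * (((j:ℝ)+1)*(K:ℝ)^(r+1)) ≥ (j:ℝ)*(K:ℝ)^(r+1) + (K:ℝ)*(K:ℝ)^j := by
            have p1 : (j:ℝ)*(K:ℝ)^(r+1) ≤ (K:ℝ) * ((j:ℝ)*(K:ℝ)^(r+1)) := by
              nlinarith [mul_nonneg (Nat.cast_nonneg j) (le_of_lt (pow_pos hKposR (r+1)))]
            have p2 : (K:ℝ)*(K:ℝ)^j ≤ (K:ℝ) * (K:ℝ)^(r+1) := by
              nlinarith [pow_pos hKposR (r+1)]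
            nlinarith [p1, p2]
          linarith [hineqR, holdR, e1]
        have := (mul_le_mul_iff_right₀ hKposR).mp hgoal
        push_cast
        linarith [this]
  -- apply the claim at level r-1
  obtain ⟨H, hH⟩ := claim (r-1) (by omega)
  refine ⟨m, H, ?_⟩
  intro i
  obtain ⟨v, hvlt⟩ := i
  have hHi := hH v (by omega)
  have harith := raimi_arith r t K N v (by omega) ht hKdef (by omega) hN
  have hr1 : (((r - 1 : ℕ)) : ℝ) ≤ (r : ℝ) := Nat.cast_le.mpr (Nat.sub_le r 1)
  have hKr1pos : (0:ℝ) ≤ (K:ℝ)^(r+1) := by positivity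
  set X := (F m).image (fun x => x + H) with hXdef
  by_cases hcase : v + 1 < r
  · have hEi : E ⟨v, hvlt⟩ = A v \ A (v+1) := by
      rw [hE]
      simp only [Fin.val_mk]
      rw [if_pos hcase]
    have hsub : X.filter (fun x => K^v ∣ x.val) ⊆ (X ∩ E ⟨v, hvlt⟩) ∪
        (Finset.univ.filter (fun x => K^(v+1) ∣ x.val)) := by
      intro x hx
      obtain ⟨hx1, hx2⟩ := Finset.mem_filter.mp hx
      by_cases hx3 : K^(v+1) ∣ x.val
      · exact Finset.mem_union_right _ (Finset.mem_filter.mpr ⟨Finset.mem_univ _, hx3⟩)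
      · refine Finset.mem_union_left _ (Finset.mem_inter.mpr ⟨hx1, ?_⟩)
        rw [hEi]
        refine Finset.mem_sdiff.mpr ⟨Finset.mem_filter.mpr ⟨Finset.mem_univ _, hx2⟩, ?_⟩
        intro hmem
        exact hx3 (Finset.mem_filter.mp hmem).2
    have hcard1 : (X.filter (fun x => K^v ∣ x.val)).card ≤ (X ∩ E ⟨v, hvlt⟩).card +
        (Finset.univ.filter (fun x : ZMod N => K^(v+1) ∣ x.val)).card :=
      le_trans (Finset.card_le_card hsub) (Finset.card_union_le _ _)
    have hA1 : (((Finset.univ.filter (fun x : ZMod N => K^(v+1) ∣ x.val)).card : ℕ) : ℝ)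
        ≤ (N:ℝ)/(K:ℝ)^(v+1) + 1 := by
      have h1 := raimi_divset_card N (K^(v+1)) (Nat.pow_pos (by omega))
      have h2 : ((N / K^(v+1) : ℕ) : ℝ) ≤ (N:ℝ)/((K^(v+1) : ℕ) : ℝ) := Nat.cast_div_le
      have h3 : ((K^(v+1) : ℕ) : ℝ) = (K:ℝ)^(v+1) := by push_cast; ring
      rw [h3] at h2
      have h4 : (((Finset.univ.filter (fun x : ZMod N => K^(v+1) ∣ x.val)).card : ℕ) : ℝ)
          ≤ ((N / K^(v+1) : ℕ) : ℝ) + 1 := by exact_mod_cast h1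
      linarith
    have hcard1R : ((X.filter (fun x => K^v ∣ x.val)).card : ℝ)
        ≤ ((X ∩ E ⟨v, hvlt⟩).card : ℝ) +
          (((Finset.univ.filter (fun x : ZMod N => K^(v+1) ∣ x.val)).card : ℕ) : ℝ) := by
      exact_mod_cast hcard1
    have hKr1 : (0:ℝ) ≤ (K:ℝ)^(r+1) := by positivity
    have hfin : ((r:ℝ) - ((r-1:ℕ):ℝ)) * (K:ℝ)^(r+1) ≥ 0 := by
      apply mul_nonneg _ hKr1
      linarith
    linarith [hHi, harith, hcard1R, hA1, hfin]
  · have hEi : E ⟨v, hvlt⟩ = A v := by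
      rw [hE]
      simp only [Fin.val_mk]
      rw [if_neg hcase]
    have hXE : X ∩ E ⟨v, hvlt⟩ = X.filter (fun x => K^v ∣ x.val) := by
      rw [hEi, hA]
      ext y
      simp only [Finset.mem_inter, Finset.mem_filter, Finset.mem_univ, true_and]
    rw [hXE]
    have hpos1 : (0:ℝ) ≤ (N:ℝ)/(K:ℝ)^(v+1) := by positivity
    have hfin : ((r:ℝ) - ((r-1:ℕ):ℝ)) * (K:ℝ)^(r+1) ≥ 0 := by
      apply mul_nonneg _ hKr1pos
      linarith
    linarith [hHi, harith, hpos1, hfin]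
end

section
/- Let r, t ∈ ℕ and let G = ℤ_N × G' where G' is a finite abelian group. Suppose E_1, …, E_r is a partition of ℤ_N such that for every t-coloring of ℤ_N there exist a color class C and h_1 ∈ ℤ_N with |(C + h_1) ∩ E_i| ≥ αN for all i. Then the partition Ẽ_i = E_i × G' of G satisfies: for every t-coloring G = F_1 ∪ ⋯ ∪ F_t, there exist a color class F_{m*} and h ∈ G with |(F_{m*} + h) ∩ Ẽ_i| ≥ (α/t)|G| for all i = 1, …, r. -/
/-- Theorem 1.4 (general abelian case): if `E₁,…,E_r` is a partition of `ℤ_N` with the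
Raimi property with constant `α`, then the partition `Ẽ_i = E_i × G'` of `G = ℤ_N × G'`
has the Raimi property with constant `α/t`. -/
theorem raimi_product (r t N : ℕ) [NeZero N] (G' : Type*) [AddCommGroup G'] [Fintype G']
    [DecidableEq G'] (hr : 0 < r) (ht : 0 < t) (α : ℝ)
    (E : Fin r → Finset (ZMod N)) (hE : ∀ x : ZMod N, ∃! i, x ∈ E i)
    (hyp : ∀ C : Fin t → Finset (ZMod N), (∀ x : ZMod N, ∃! m, x ∈ C m) →
      ∃ (m : Fin t) (h₁ : ZMod N), ∀ i : Fin r,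
        α * N ≤ (((C m).image (fun x => x + h₁)) ∩ E i).card) :
    ∀ F : Fin t → Finset (ZMod N × G'), (∀ x : ZMod N × G', ∃! m, x ∈ F m) →
      ∃ (m : Fin t) (h : ZMod N × G'), ∀ i : Fin r,
        (α / t) * (N * Fintype.card G') ≤
          (((F m).image (fun x => x + h)) ∩ (E i ×ˢ Finset.univ)).card := by
  classical
  intro F hF
  -- fiber sets
  set A : Fin t → ZMod N → Finset G' :=
    fun m x => Finset.univ.filter (fun y => (x, y) ∈ F m) with hA
  have hchoose : ∀ x : ZMod N, ∃ m : Fin t, Fintype.card G' ≤ t * (A m x).card := by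
    intro x
    have hsum : ∑ m : Fin t, (A m x).card = Fintype.card G' := by
      rw [← Finset.card_univ,
        Finset.card_eq_sum_card_fiberwise
          (f := fun y : G' => (hF (x, y)).choose) (t := Finset.univ) (by simp)]
      refine Finset.sum_congr rfl fun m _ => ?_
      congr 1
      ext y
      simp only [hA, Finset.mem_filter, Finset.mem_univ, true_and]
      constructor
      · intro hy; exact ((hF (x, y)).choose_spec.2 m hy).symm
      · rintro rfl; exact (hF (x, y)).choose_spec.1
    by_contra hcon
    push_neg at hcon
    have hne : (Finset.univ : Finset (Fin t)).Nonempty := by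
      have : Nonempty (Fin t) := Fin.pos_iff_nonempty.mp ht
      exact Finset.univ_nonempty
    have hlt : ∑ m : Fin t, t * (A m x).card < ∑ _m : Fin t, Fintype.card G' :=
      Finset.sum_lt_sum_of_nonempty hne (fun m _ => hcon m)
    rw [← Finset.mul_sum, hsum, Finset.sum_const, Finset.card_univ, Fintype.card_fin,
      smul_eq_mul] at hlt
    omega
  set mfun : ZMod N → Fin t := fun x => (hchoose x).choose with hmfun
  have hmspec : ∀ x, Fintype.card G' ≤ t * (A (mfun x) x).card :=
    fun x => (hchoose x).choose_spec
  set C : Fin t → Finset (ZMod N) := fun m => Finset.univ.filter (fun x => mfun x = m)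
    with hC
  have hCpart : ∀ x : ZMod N, ∃! m, x ∈ C m := by
    intro x
    refine ⟨mfun x, by simp [hC], fun m hm => ?_⟩
    simp only [hC, Finset.mem_filter] at hm
    exact hm.2.symm
  obtain ⟨m, h₁, hm⟩ := hyp C hCpart
  refine ⟨m, (h₁, 0), fun i => ?_⟩
  set T : Finset (ZMod N) := ((C m).image (fun x => x + h₁)) ∩ E i with hT
  have hTmem : ∀ x ∈ T, Fintype.card G' ≤ t * (A m (x - h₁)).card := by
    intro x hx
    rw [hT, Finset.mem_inter, Finset.mem_image] at hx
    obtain ⟨⟨z, hz, rfl⟩, _⟩ := hx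
    simp only [hC, Finset.mem_filter] at hz
    have := hmspec z
    rw [hz.2] at this
    simpa using this
  set S : Finset (ZMod N × G') := T.biUnion (fun x => ({x} : Finset (ZMod N)) ×ˢ A m (x - h₁))
    with hS
  have hScard : S.card = ∑ x ∈ T, (A m (x - h₁)).card := by
    rw [hS, Finset.card_biUnion]
    · refine Finset.sum_congr rfl fun x _ => ?_
      rw [Finset.card_product, Finset.card_singleton, one_mul]
    · intro a _ b _ hab
      simp only [Finset.disjoint_left]
      rintro ⟨x, y⟩ hx hy
      simp only [Finset.mem_product, Finset.mem_singleton] at hx hy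
      exact hab (hx.1.symm.trans hy.1)
  have hSsub : S ⊆ ((F m).image (fun x => x + (h₁, (0 : G')))) ∩ (E i ×ˢ Finset.univ) := by
    intro p hp
    rw [hS, Finset.mem_biUnion] at hp
    obtain ⟨x, hx, hpmem⟩ := hp
    obtain ⟨px, py⟩ := p
    simp only [Finset.mem_product, Finset.mem_singleton] at hpmem
    obtain ⟨rfl, hy⟩ := hpmem
    simp only [hA, Finset.mem_filter, Finset.mem_univ, true_and] at hy
    rw [Finset.mem_inter, Finset.mem_image]
    constructor
    · exact ⟨(px - h₁, py), hy, by simp⟩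
    · rw [hT, Finset.mem_inter] at hx
      simp [hx.2]
  -- now the real-number chain
  have htR : (0 : ℝ) < t := by exact_mod_cast ht
  have step1 : α * N ≤ (T.card : ℝ) := hm i
  have step2 : (T.card : ℝ) * (Fintype.card G' / t) ≤ (S.card : ℝ) := by
    rw [hScard]
    push_cast
    calc (T.card : ℝ) * (Fintype.card G' / t) = ∑ _x ∈ T, (Fintype.card G' / t : ℝ) := by
          rw [Finset.sum_const, nsmul_eq_mul]
      _ ≤ ∑ x ∈ T, ((A m (x - h₁)).card : ℝ) := by
          refine Finset.sum_le_sum fun x hx => ?_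
          rw [div_le_iff₀ htR]
          have := hTmem x hx
          calc ((Fintype.card G' : ℝ)) ≤ (t * (A m (x - h₁)).card : ℕ) := by exact_mod_cast this
            _ = ((A m (x - h₁)).card : ℝ) * t := by push_cast; ring
  have step3 : (S.card : ℝ) ≤
      ((((F m).image (fun x => x + ((h₁, (0 : G')) : ZMod N × G'))) ∩ (E i ×ˢ Finset.univ)).card : ℝ) := by
    exact_mod_cast Finset.card_le_card hSsub
  have hG0 : (0 : ℝ) ≤ (Fintype.card G' : ℝ) / t := by positivity
  calc (α / t) * (N * Fintype.card G') = (α * N) * ((Fintype.card G' : ℝ) / t) := by ring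
    _ ≤ (T.card : ℝ) * ((Fintype.card G' : ℝ) / t) := by
        exact mul_le_mul_of_nonneg_right step1 hG0
    _ ≤ (S.card : ℝ) := step2
    _ ≤ _ := step3
end

section
/- Let r, t, k ∈ ℕ. There exists a partition ℕ^k = E_1 ∪ ⋯ ∪ E_r such that for every coloring ℕ^k = F_1 ∪ ⋯ ∪ F_t with t colors, there exist a single color class F_m, an element x_0 ∈ ℕ, and an infinite sequence (x_n)_{n≥1} in ℕ such that for every h ∈ x_0 + FS({x_n}) and every i ∈ {1, …, r}, the set (F_m + h·𝟙_k) ∩ E_i is infinite, where 𝟙_k = (1,…,1) ∈ ℕ^k. -/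
namespace RaimiAux

/-- The base `b = 4r+3`. -/
def bb (r : ℕ) : ℕ := 4 * r + 3

lemma bb_pos (r : ℕ) : 0 < bb r := by unfold bb; omega
lemma one_lt_bb (r : ℕ) : 1 < bb r := by unfold bb; omega

/-- Transparent digit. -/
def Tdig (r δ : ℕ) : Prop := δ ≤ 2 * r + 1 ∨ δ % 2 = 0

instance (r δ : ℕ) : Decidable (Tdig r δ) :=
  inferInstanceAs (Decidable (δ ≤ 2 * r + 1 ∨ δ % 2 = 0))

/-- digit of `n` at position `σ` in base `bb r`. -/
def dig (r n σ : ℕ) : ℕ := n / (bb r) ^ σ % bb r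

/-- Transparent number: every digit transparent. -/
def TrN (r c : ℕ) : Prop := ∀ σ, Tdig r (dig r c σ)

/-- Position of the highest non-transparent digit (0 if none). -/
def sPos (r n : ℕ) : ℕ := Nat.findGreatest (fun s => ¬ Tdig r (dig r n s)) n

/-- The label of `n`. -/
def gval (r n : ℕ) : ℕ :=
  let δ := dig r n (sPos r n)
  if 2 * r + 3 ≤ δ ∧ (δ - (2 * r + 3)) / 2 < r then (δ - (2 * r + 3)) / 2 else 0

lemma gval_lt (r : ℕ) (hr : 0 < r) (n : ℕ) : gval r n < r := by
  unfold gval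
  simp only []
  split
  · next h => exact h.2
  · exact hr

lemma dig_lt (r n σ : ℕ) : dig r n σ < bb r := Nat.mod_lt _ (bb_pos r)

lemma pow_split (r : ℕ) {e₁ e : ℕ} (h : e₁ ≤ e) :
    (bb r) ^ e = (bb r) ^ e₁ * (bb r) ^ (e - e₁) := by
  rw [← pow_add]; congr 1; omega

/-- digit of `c * b^u + x` at high positions. -/
lemma dig_append_high (r c x u σ : ℕ) (hx : x < (bb r) ^ u) (h : u ≤ σ) :
    dig r (c * (bb r) ^ u + x) σ = dig r c (σ - u) := by
  unfold dig
  have h1 : (c * (bb r) ^ u + x) / (bb r) ^ u = c := by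
    rw [add_comm, Nat.add_mul_div_right _ _ (pow_pos (bb_pos r) u), Nat.div_eq_of_lt hx,
      zero_add]
  have h2 : (bb r) ^ σ = (bb r) ^ u * (bb r) ^ (σ - u) := pow_split r h
  rw [h2, ← Nat.div_div_eq_div_mul, h1]

/-- digit of `c * b^u + x` at low positions. -/
lemma dig_append_low (r c x u σ : ℕ) (h : σ < u) :
    dig r (c * (bb r) ^ u + x) σ = dig r x σ := by
  unfold dig
  have h2 : (bb r) ^ u = (bb r) ^ (σ + 1) * (bb r) ^ (u - (σ + 1)) := pow_split r h
  have h3 : (bb r) ^ (σ + 1) = (bb r) ^ σ * bb r := by rw [pow_succ]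
  have : c * (bb r) ^ u = (c * (bb r) ^ (u - (σ+1)) * bb r) * (bb r) ^ σ := by
    rw [h2, h3]; ring
  rw [this, add_comm, Nat.add_mul_div_right _ _ (pow_pos (bb_pos r) σ)]
  rw [Nat.add_mul_mod_self_right]

lemma TrN_append (r c w u : ℕ) (hc : TrN r c) (hw : TrN r w) (hwu : w < (bb r) ^ u) :
    TrN r (c * (bb r) ^ u + w) := by
  intro σ
  rcases lt_or_ge σ u with h | h
  · rw [dig_append_low r c w u σ h]; exact hw σ
  · rw [dig_append_high r c w u σ hwu h]; exact hc _

lemma TrN_pow (r j : ℕ) : TrN r ((bb r) ^ j) := by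
  intro σ
  unfold dig
  rcases lt_trichotomy σ j with h | h | h
  · have : (bb r) ^ j = (bb r) ^ σ * (bb r) ^ (j - σ) := pow_split r h.le
    rw [this, Nat.mul_div_cancel_left _ (pow_pos (bb_pos r) σ)]
    have : (bb r) ^ (j - σ) % bb r = 0 := by
      have : (bb r) ^ (j - σ) = bb r * (bb r) ^ (j - σ - 1) := by
        rw [← pow_succ']; congr 1; omega
      rw [this]; exact Nat.mul_mod_right _ _
    rw [this]; left; omega
  · subst h
    rw [Nat.div_self (pow_pos (bb_pos r) σ)]
    have : (1:ℕ) % bb r = 1 := Nat.mod_eq_of_lt (one_lt_bb r)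
    rw [this]; left; omega
  · rw [Nat.div_eq_of_lt (Nat.pow_lt_pow_right (one_lt_bb r) h)]
    have : (0:ℕ) % bb r = 0 := Nat.zero_mod _
    rw [this]; left; omega


/-- If the digit at `s` is the solid digit `2r+3+2i` and all digits above `s` are
transparent, then `gval` is `i`. -/
lemma gval_eq (r : ℕ) (q s i : ℕ) (hi : i < r)
    (h1 : dig r q s = 2 * r + 3 + 2 * i)
    (h2 : ∀ σ, s < σ → Tdig r (dig r q σ)) : gval r q = i := by
  have hsq : s ≤ q := by
    by_contra hc
    push_neg at hc
    have : q < (bb r) ^ s := lt_of_lt_of_le hc (Nat.le_of_lt (Nat.lt_pow_self (one_lt_bb r) : s < bb r ^ s))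
    have : dig r q s = 0 := by unfold dig; rw [Nat.div_eq_of_lt this]; exact Nat.zero_mod _
    omega
  have hsp : sPos r q = s := by
    unfold sPos
    rw [Nat.findGreatest_eq_iff]
    refine ⟨hsq, fun _ => ?_, fun n hn _ => ?_⟩
    · rw [h1]; unfold Tdig; omega
    · intro hcon; exact hcon (h2 n hn)
  unfold gval
  simp only [hsp, h1]
  have e1 : (2 * r + 3 + 2 * i - (2 * r + 3)) / 2 = i := by omega
  rw [if_pos ⟨by omega, by omega⟩]
  exact e1

lemma dig_zero (r σ : ℕ) : dig r 0 σ = 0 := by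
  unfold dig; rw [Nat.zero_div, Nat.zero_mod]

lemma dig_div (r x u σ : ℕ) : dig r (x / (bb r) ^ u) σ = dig r x (σ + u) := by
  unfold dig
  rw [Nat.div_div_eq_div_mul, ← pow_add, add_comm u σ]

lemma Tdig_zero (r : ℕ) : Tdig r 0 := by left; omega

/-- Transparent numbers are nearby: if all digits of `x` from position `V` up are
transparent, there is a transparent `w` with `x ≤ w ≤ x + b^V`. -/
lemma bump (r : ℕ) : ∀ (V x : ℕ), (∀ σ, V ≤ σ → Tdig r (dig r x σ)) →
    ∃ w, TrN r w ∧ x ≤ w ∧ w ≤ x + (bb r) ^ V := by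
  intro V
  induction V with
  | zero =>
    intro x hx
    exact ⟨x, fun σ => hx σ (Nat.zero_le σ), le_rfl, by omega⟩
  | succ V ih =>
    intro x hx
    by_cases hV : Tdig r (dig r x V)
    · obtain ⟨w, hw1, hw2, hw3⟩ := ih x (by
        intro σ hσ
        rcases eq_or_lt_of_le hσ with h | h
        · exact h ▸ hV
        · exact hx σ h)
      refine ⟨w, hw1, hw2, le_trans hw3 ?_⟩
      have : (bb r) ^ V ≤ (bb r) ^ (V+1) := Nat.pow_le_pow_right (bb_pos r) (by omega)
      omega
    · have hb1 : 1 < bb r := one_lt_bb r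
      have hδb : dig r x V < bb r := dig_lt r x V
      have hδ1 : 2 * r + 2 ≤ dig r x V ∧ (dig r x V) % 2 = 1 := by
        unfold Tdig at hV; omega
      set Q := x / (bb r) ^ (V+1) with hQ
      set δ := dig r x V with hδdef
      have hδT : Tdig r (δ + 1) := by unfold Tdig; omega
      have hbb : bb r = 4 * r + 3 := rfl
      have hδlt : δ + 1 < bb r := by omega
      have hxdec : x / (bb r) ^ V = Q * (bb r) + δ := by
        have h2 : x / (bb r) ^ V / bb r = Q := by
          rw [hQ, Nat.div_div_eq_div_mul, ← pow_succ]
        have hδ2 : (x / (bb r) ^ V) % bb r = δ := rfl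
        conv_lhs => rw [← Nat.div_add_mod (x / (bb r) ^ V) (bb r)]
        rw [h2, hδ2, mul_comm]
      refine ⟨(Q * (bb r) + (δ + 1)) * (bb r) ^ V, ?_, ?_, ?_⟩
      · -- transparency of w
        intro σ
        rcases lt_or_ge σ V with h | h
        · have e : dig r ((Q * (bb r) + (δ + 1)) * (bb r) ^ V + 0) σ = dig r 0 σ :=
            dig_append_low r _ 0 V σ h
          simp only [add_zero] at e
          rw [e, dig_zero]
          exact Tdig_zero r
        · obtain ⟨τ, rfl⟩ := Nat.exists_eq_add_of_le h
          have e : dig r ((Q * (bb r) + (δ + 1)) * (bb r) ^ V + 0) (V + τ)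
              = dig r (Q * (bb r) + (δ + 1)) (V + τ - V) :=
            dig_append_high r _ 0 V (V + τ) (pow_pos (bb_pos r) V) (by omega)
          simp only [add_zero] at e
          have e' : V + τ - V = τ := by omega
          rw [e' ] at e
          rw [e]
          rcases Nat.eq_zero_or_pos τ with hτ | hτ
          · subst hτ
            unfold dig
            simp only [pow_zero, Nat.div_one]
            have : (Q * (bb r) + (δ + 1)) % (bb r) = (δ + 1) % bb r := by
              rw [add_comm, Nat.add_mul_mod_self_right]
            rw [this, Nat.mod_eq_of_lt hδlt]
            exact hδT
          · have e2 : dig r (Q * (bb r) + (δ + 1)) τ = dig r Q (τ - 1) := by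
              have hp1 : Q * bb r + (δ + 1) = Q * (bb r) ^ 1 + (δ + 1) := by
                rw [pow_one]
              rw [hp1]
              exact dig_append_high r Q (δ+1) 1 τ (by rw [pow_one]; omega) hτ
            rw [e2, dig_div]
            have e3 : τ - 1 + (V + 1) = V + τ := by omega
            rw [e3]
            exact hx _ (by omega)
      · -- x ≤ w
        have hdm : (bb r) ^ V * (x / (bb r) ^ V) + x % (bb r) ^ V = x := Nat.div_add_mod _ _
        have hm : x % (bb r) ^ V < (bb r) ^ V := Nat.mod_lt _ (pow_pos (bb_pos r) V)
        have hDw : (Q * (bb r) + (δ + 1)) * (bb r) ^ V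
            = (bb r) ^ V * (x / (bb r) ^ V) + (bb r) ^ V := by rw [hxdec]; ring
        calc x = (bb r) ^ V * (x / (bb r) ^ V) + x % (bb r) ^ V := hdm.symm
        _ ≤ (bb r) ^ V * (x / (bb r) ^ V) + (bb r) ^ V := by omega
        _ = (Q * (bb r) + (δ + 1)) * (bb r) ^ V := hDw.symm
      · -- w ≤ x + b^(V+1)
        have hDw : (Q * (bb r) + (δ + 1)) * (bb r) ^ V
            = (x / (bb r) ^ V) * (bb r) ^ V + (bb r) ^ V := by rw [hxdec]; ring
        have hpow : (bb r) ^ V ≤ (bb r) ^ (V+1) := Nat.pow_le_pow_right (bb_pos r) (by omega)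
        calc (Q * (bb r) + (δ + 1)) * (bb r) ^ V
            = (x / (bb r) ^ V) * (bb r) ^ V + (bb r) ^ V := hDw
        _ ≤ x + (bb r) ^ V := add_le_add_left (Nat.div_mul_le_self x _) _
        _ ≤ x + (bb r) ^ (V+1) := by omega

/-- `X` contains arbitrarily large, arbitrarily far transparent blocks. -/
def thick (r : ℕ) (X : Set ℕ) : Prop :=
  ∀ e N, ∃ c, TrN r c ∧ N ≤ c * (bb r) ^ e ∧
    ∀ q, c * (bb r) ^ e ≤ q → q < (c + 1) * (bb r) ^ e → q ∈ X

/-- `A` is `b^e₁`-dense in arbitrarily large, arbitrarily far transparent blocks. -/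
def denseAt (r : ℕ) (A : Set ℕ) (e₁ : ℕ) : Prop :=
  ∀ e N, e₁ ≤ e → ∃ c, TrN r c ∧ N ≤ c * (bb r) ^ e ∧
    ∀ w, w < (bb r) ^ (e - e₁) → TrN r w →
      ∃ n, n ∈ A ∧ (c * (bb r) ^ (e - e₁) + w) * (bb r) ^ e₁ ≤ n ∧
        n < (c * (bb r) ^ (e - e₁) + w + 1) * (bb r) ^ e₁

lemma thick_univ (r : ℕ) : thick r (Set.univ : Set ℕ) := by
  intro e N
  refine ⟨(bb r) ^ N, TrN_pow r N, ?_, fun q _ _ => trivial⟩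
  calc N ≤ (bb r) ^ N := (Nat.lt_pow_self (one_lt_bb r) : N < bb r ^ N).le
  _ ≤ (bb r) ^ N * (bb r) ^ e := Nat.le_mul_of_pos_right _ (pow_pos (bb_pos r) e)

lemma step (r : ℕ) (T A B : Set ℕ) (hT : thick r T)
    (hAB : ∀ x, x ∈ T → x ∈ A ∨ x ∈ B) :
    (∃ e₁, denseAt r A e₁) ∨ thick r B := by
  by_cases hB : thick r B
  · exact Or.inr hB
  · left
    unfold thick at hB
    push_neg at hB
    obtain ⟨e₁, N₁, hB⟩ := hB
    refine ⟨e₁, ?_⟩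
    intro e N he
    obtain ⟨c, hc1, hc2, hc3⟩ := hT e (max N N₁)
    refine ⟨c, hc1, le_trans (le_max_left _ _) hc2, ?_⟩
    intro w hw hwT
    have hsplit : (bb r) ^ e = (bb r) ^ e₁ * (bb r) ^ (e - e₁) := pow_split r he
    have key : (c * (bb r) ^ (e - e₁) + w) * (bb r) ^ e₁ = c * (bb r) ^ e + w * (bb r) ^ e₁ := by
      rw [hsplit]; ring
    have key2 : (c * (bb r) ^ (e - e₁) + w + 1) * (bb r) ^ e₁
        ≤ (c + 1) * (bb r) ^ e := by
      rw [hsplit]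
      have hw1 : w + 1 ≤ (bb r) ^ (e - e₁) := hw
      calc (c * (bb r) ^ (e - e₁) + w + 1) * (bb r) ^ e₁
          ≤ (c * (bb r) ^ (e - e₁) + (bb r) ^ (e - e₁)) * (bb r) ^ e₁ := by
            apply Nat.mul_le_mul_right
            omega
      _ = (c + 1) * ((bb r) ^ e₁ * (bb r) ^ (e - e₁)) := by ring
    have hTrN : TrN r (c * (bb r) ^ (e - e₁) + w) := TrN_append r c w _ hc1 hwT hw
    have hpos : N₁ ≤ (c * (bb r) ^ (e - e₁) + w) * (bb r) ^ e₁ := by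
      rw [key]
      calc N₁ ≤ max N N₁ := le_max_right _ _
      _ ≤ c * (bb r) ^ e := hc2
      _ ≤ c * (bb r) ^ e + w * (bb r) ^ e₁ := Nat.le_add_right _ _
    obtain ⟨q, hq1, hq2, hq3⟩ := hB _ hTrN hpos
    have hqT : q ∈ T := by
      apply hc3 q
      · rw [key] at hq1
        omega
      · exact lt_of_lt_of_le hq2 key2
    rcases hAB q hqT with h | h
    · exact ⟨q, h, hq1, hq2⟩
    · exact absurd h hq3

lemma cover (r : ℕ) : ∀ (l : List (Set ℕ)) (T : Set ℕ), thick r T →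
    (∀ x, x ∈ T → ∃ A ∈ l, x ∈ A) → ∃ A ∈ l, ∃ e₁, denseAt r A e₁ := by
  intro l
  induction l with
  | nil =>
    intro T hT hcov
    obtain ⟨c, -, -, hc3⟩ := hT 0 0
    have : c * (bb r) ^ 0 ∈ T := hc3 _ le_rfl (by simp)
    obtain ⟨A, hA, -⟩ := hcov _ this
    exact absurd hA List.not_mem_nil
  | cons A l ih =>
    intro T hT hcov
    rcases step r T A {x | x ∈ T ∧ x ∉ A} hT (fun x hx => by
      by_cases h : x ∈ A
      · exact Or.inl h
      · exact Or.inr ⟨hx, h⟩) with h | h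
    · exact ⟨A, List.mem_cons_self, h⟩
    · obtain ⟨A', hA', hd⟩ := ih {x | x ∈ T ∧ x ∉ A} h (by
        intro x hx
        obtain ⟨A'', hA'', hxA''⟩ := hcov x hx.1
        rcases List.mem_cons.mp hA'' with rfl | hmem
        · exact absurd hxA'' hx.2
        · exact ⟨A'', hmem, hxA''⟩)
      exact ⟨A', List.mem_cons_of_mem A hA', hd⟩

/-- All digits of `(2r+3+2i)·b − 1` are transparent. -/
lemma TrN_KB (r i : ℕ) (hi : i < r) : TrN r ((2*r+3+2*i) * bb r - 1) := by
  have hbb : bb r = 4*r+3 := rfl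
  set J := 2*r+2+2*i with hJ
  have hKJ : (2*r+3+2*i) = J + 1 := by omega
  have hkey : (2*r+3+2*i) * bb r - 1 = J * bb r + (4*r+2) := by
    rw [hKJ, add_one_mul]
    omega
  rw [hkey]
  intro σ
  match σ with
  | 0 =>
    unfold dig
    simp only [pow_zero, Nat.div_one]
    have : (J * bb r + (4*r+2)) % bb r = (4*r+2) % bb r := by
      rw [add_comm, Nat.add_mul_mod_self_right]
    rw [this, Nat.mod_eq_of_lt (by omega)]
    right; omega
  | 1 =>
    unfold dig
    simp only [pow_one]
    have h1 : (J * bb r + (4*r+2)) / bb r = J := by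
      rw [add_comm, Nat.add_mul_div_right _ _ (bb_pos r), Nat.div_eq_of_lt (by omega), zero_add]
    rw [h1, Nat.mod_eq_of_lt (by omega)]
    right; omega
  | (τ+2) =>
    unfold dig
    have hlt : J * bb r + (4*r+2) < bb r ^ (τ+2) := by
      have h2 : bb r ^ 2 ≤ bb r ^ (τ+2) := Nat.pow_le_pow_right (bb_pos r) (by omega)
      have h3 : J * bb r + (4*r+2) < bb r ^ 2 := by
        have h4 : J * bb r ≤ (4*r+2) * bb r := Nat.mul_le_mul_right _ (by omega)
        have h5 : (4*r+2) * bb r + bb r = bb r ^ 2 := by rw [hbb]; ring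
        omega
      omega
    rw [Nat.div_eq_of_lt hlt, Nat.zero_mod]
    left; omega

/-- The main witness lemma: a `denseAt`-set has, for every shift `d ≥ b^(e₁+1)` and
every label `i < r`, arbitrarily large members `n` with `gval (n+d) = i`. -/
lemma witness (r : ℕ) (hr : 0 < r) (A : Set ℕ) (e₁ : ℕ) (hA : denseAt r A e₁)
    (d i N : ℕ) (hi : i < r) (hd : (bb r) ^ (e₁ + 1) ≤ d) :
    ∃ n, N ≤ n ∧ n ∈ A ∧ gval r (n + d) = i := by
  have hb := one_lt_bb r
  have hbpos := bb_pos r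
  have hbb : bb r = 4 * r + 3 := rfl
  have hd0 : d ≠ 0 := by
    have : 0 < (bb r) ^ (e₁+1) := pow_pos hbpos _
    omega
  set p := Nat.log (bb r) d with hp
  have hp1 : (bb r) ^ p ≤ d := Nat.pow_log_le_self _ hd0
  have hp2 : d < (bb r) ^ (p + 1) := Nat.lt_pow_succ_log_self hb d
  have hpe : e₁ + 1 ≤ p := by rw [hp]; exact (Nat.le_log_iff_pow_le hb hd0).mpr hd
  set K := 2 * r + 3 + 2 * i with hK
  have hKb : K + 1 < bb r := by omega
  set M := K * (bb r) ^ (p + 3) with hM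
  have hpow13 : (bb r) ^ (p + 1) ≤ (bb r) ^ (p + 3) := Nat.pow_le_pow_right hbpos (by omega)
  have hpowe2 : (bb r) ^ e₁ ≤ (bb r) ^ (p + 2) := Nat.pow_le_pow_right hbpos (by omega)
  have hpow12 : (bb r) ^ (p + 1) ≤ (bb r) ^ (p + 2) := Nat.pow_le_pow_right hbpos (by omega)
  have hdM : d < M :=
    lt_of_lt_of_le hp2 (le_trans hpow13 (Nat.le_mul_of_pos_left _ (by omega)))
  have he₁d : (bb r) ^ e₁ < d := lt_of_lt_of_le (Nat.pow_lt_pow_right hb (by omega)) hd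
  have h2b : 3 * (bb r) ^ (p+2) ≤ (bb r) ^ (p+3) := by
    have e6 : (bb r) ^ (p+3) = bb r * (bb r) ^ (p+2) := by rw [← pow_succ']
    have := Nat.mul_le_mul_right ((bb r) ^ (p+2)) (show (3:ℕ) ≤ bb r by omega)
    calc 3 * (bb r) ^ (p+2) ≤ bb r * (bb r) ^ (p+2) := this
    _ = (bb r) ^ (p+3) := e6.symm
  have hM4 : M + (bb r) ^ (p+3) ≤ (bb r) ^ (p+4) := by
    have e5 : (bb r) ^ (p+4) = bb r * (bb r) ^ (p+3) := by rw [← pow_succ']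
    have hMle : M ≤ (4*r+2) * (bb r) ^ (p+3) := Nat.mul_le_mul_right _ (by omega)
    have e9 : (4*r+2) * (bb r) ^ (p+3) + (bb r) ^ (p+3) = bb r * (bb r) ^ (p+3) := by
      rw [hbb]; ring
    omega
  set x₁ := (M - d) / (bb r) ^ e₁ + 1 with hx₁
  have hxe : x₁ * (bb r) ^ e₁
      = ((M - d) / (bb r) ^ e₁) * (bb r) ^ e₁ + (bb r) ^ e₁ := by rw [hx₁]; ring
  have hA1 : M - d < x₁ * (bb r) ^ e₁ := by
    have h := Nat.lt_div_mul_add (a := M - d) (pow_pos hbpos e₁)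
    omega
  have hA2 : x₁ * (bb r) ^ e₁ ≤ M - d + (bb r) ^ e₁ := by
    have h := Nat.div_mul_le_self (M - d) ((bb r) ^ e₁)
    omega
  have hsplit23 : (bb r) ^ (p + 3) = (bb r) ^ (p+2) * bb r := by rw [← pow_succ]
  have hKB1 : 1 ≤ K * bb r := by
    have := Nat.mul_le_mul (show 1 ≤ K by omega) (show 1 ≤ bb r by omega)
    omega
  have hd3 : d < (bb r) ^ (p+2) := lt_of_lt_of_le hp2 hpow12
  have hQeq : x₁ * (bb r) ^ e₁ / (bb r) ^ (p + 2) = K * bb r - 1 := by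
    apply Nat.div_eq_of_lt_le
    · have e1 : (K * bb r - 1) * (bb r) ^ (p+2) + (bb r) ^ (p+2) = M := by
        have e1a : (K * bb r - 1) * (bb r) ^ (p+2) + (bb r) ^ (p+2)
            = (K * bb r - 1 + 1) * (bb r) ^ (p+2) := by ring
        rw [e1a, Nat.sub_add_cancel hKB1, hM, hsplit23]
        ring
      omega
    · have e2 : (K * bb r - 1 + 1) * (bb r) ^ (p+2) = M := by
        rw [Nat.sub_add_cancel hKB1, hM, hsplit23]; ring
      omega
  set V := p + 2 - e₁ with hV
  have hdigx₁ : ∀ σ, V ≤ σ → Tdig r (dig r x₁ σ) := by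
    intro σ hσ
    have e1 : x₁ = x₁ * (bb r) ^ e₁ / (bb r) ^ e₁ :=
      (Nat.mul_div_cancel _ (pow_pos hbpos e₁)).symm
    have e2 : dig r x₁ σ = dig r (x₁ * (bb r) ^ e₁) (σ + e₁) := by
      conv_lhs => rw [e1]
      exact dig_div r _ e₁ σ
    have e3 : dig r (x₁ * (bb r) ^ e₁) (σ + e₁)
        = dig r (x₁ * (bb r) ^ e₁ / (bb r) ^ (p+2)) (σ - V) := by
      rw [dig_div]
      congr 1
      omega
    rw [e2, e3, hQeq]
    exact TrN_KB r i hi _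
  obtain ⟨w, hwT, hw1, hw2⟩ := bump r V x₁ hdigx₁
  have hwx : w * (bb r) ^ e₁ ≤ x₁ * (bb r) ^ e₁ + (bb r) ^ (p+2) := by
    have e4 : (x₁ + (bb r) ^ V) * (bb r) ^ e₁ = x₁ * (bb r) ^ e₁ + (bb r) ^ (p+2) := by
      rw [add_mul, ← pow_add]
      congr 2
      omega
    calc w * (bb r) ^ e₁ ≤ (x₁ + (bb r) ^ V) * (bb r) ^ e₁ := Nat.mul_le_mul_right _ hw2
    _ = _ := e4
  have hx₁w : x₁ * (bb r) ^ e₁ ≤ w * (bb r) ^ e₁ := Nat.mul_le_mul_right _ hw1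
  have hwlt : w < (bb r) ^ (p + 4 - e₁) := by
    have h5 : w * (bb r) ^ e₁ < (bb r) ^ (p+4) := by omega
    have e7 : (bb r) ^ (p+4) = (bb r) ^ (p+4-e₁) * (bb r) ^ e₁ := by
      rw [← pow_add]; congr 1; omega
    rw [e7] at h5
    exact lt_of_mul_lt_mul_right h5 (Nat.zero_le _)
  obtain ⟨c, hcT, hcN, hcw⟩ := hA (p+4) N (by omega)
  obtain ⟨n, hnA, hn1, hn2⟩ := hcw w hwlt hwT
  have epow : (bb r) ^ (p+4-e₁) * (bb r) ^ e₁ = (bb r) ^ (p+4) := by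
    rw [← pow_add]
    congr 1
    omega
  have hkey : (c * (bb r) ^ (p+4-e₁) + w) * (bb r) ^ e₁
      = c * (bb r) ^ (p+4) + w * (bb r) ^ e₁ := by
    rw [add_mul, mul_assoc, epow]
  have hkey2 : (c * (bb r) ^ (p+4-e₁) + w + 1) * (bb r) ^ e₁
      = c * (bb r) ^ (p+4) + w * (bb r) ^ e₁ + (bb r) ^ e₁ := by
    rw [add_mul, add_mul, mul_assoc, epow, one_mul]
  rw [hkey] at hn1
  rw [hkey2] at hn2
  refine ⟨n, by omega, hnA, ?_⟩
  set ζ := n + d - c * (bb r) ^ (p+4) with hζ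
  have hζ1 : n + d = c * (bb r) ^ (p+4) + ζ := by omega
  have hζlow : M + 1 ≤ ζ := by omega
  have hζhigh : ζ < M + (bb r) ^ (p+3) := by omega
  have hζb : ζ < (bb r) ^ (p+4) := by omega
  have hdig1 : dig r (n + d) (p+3) = 2*r+3+2*i := by
    rw [hζ1, dig_append_low r c ζ (p+4) (p+3) (by omega)]
    unfold dig
    have e8 : (K+1) * (bb r) ^ (p+3) = M + (bb r) ^ (p+3) := by rw [hM]; ring
    have hdd : ζ / (bb r) ^ (p+3) = K := Nat.div_eq_of_lt_le (by omega) (by omega)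
    rw [hdd, Nat.mod_eq_of_lt (by omega)]
  have hdig2 : ∀ σ, p+3 < σ → Tdig r (dig r (n+d) σ) := by
    intro σ hσ
    rw [hζ1, dig_append_high r c ζ (p+4) σ hζb (by omega)]
    exact hcT _
  exact gval_eq r (n+d) (p+3) i hi hdig1 hdig2

end RaimiAux

/-- Theorem 1.2 (higher-dimensional Raimi with diagonal shifts): there is a partition
`ℕ^k = E₁ ∪ ⋯ ∪ E_r` such that for every `t`-coloring `ℕ^k = F₁ ∪ ⋯ ∪ F_t` there are a
color class `F_m`, `x₀ ∈ ℕ` and an infinite sequence `(x_n)` of positive integers such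
that for every `h ∈ x₀ + FS({x_n})` and every `i`, `(F_m + h·𝟙_k) ∩ E_i` is infinite. -/
theorem raimi_higher_dimensional (r t k : ℕ) (hr : 0 < r) (ht : 0 < t) (hk : 0 < k) :
    ∃ E : Fin r → Set (Fin k → ℕ), (∀ p : Fin k → ℕ, ∃! i, p ∈ E i) ∧
      ∀ F : Fin t → Set (Fin k → ℕ), (∀ p : Fin k → ℕ, ∃! m, p ∈ F m) →
        ∃ (m : Fin t) (x₀ : ℕ) (x : ℕ → ℕ), 0 < x₀ ∧ (∀ n, 0 < x n) ∧
          ∀ h : ℕ, (∃ s : Finset ℕ, s.Nonempty ∧ h = x₀ + ∑ n ∈ s, x n) →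
            ∀ i : Fin r,
              Set.Infinite (((fun p : Fin k → ℕ => p + fun _ => h) '' F m) ∩ E i) := by
  classical
  refine ⟨fun i => {q | RaimiAux.gval r (∑ j, q j) = i.val}, ?_, ?_⟩
  · intro q
    refine ⟨⟨RaimiAux.gval r (∑ j, q j), RaimiAux.gval_lt r hr _⟩, rfl, ?_⟩
    intro i hi
    exact Fin.ext hi.symm
  · intro F hF
    set j0 : Fin k := ⟨0, hk⟩ with hj0
    set P : ℕ → (Fin k → ℕ) := fun n => fun j => if j = j0 then n else 0 with hP
    have hPsum : ∀ n, (∑ j, P n j) = n := by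
      intro n
      simp [hP]
    set cpick : ℕ → Fin t := fun n => (hF (P n)).exists.choose with hcp
    have hcpick : ∀ n, P n ∈ F (cpick n) := fun n => (hF (P n)).exists.choose_spec
    obtain ⟨A, hAmem, e₁, hdense⟩ :=
      RaimiAux.cover r ((List.finRange t).map (fun m => {n : ℕ | cpick n = m}))
        Set.univ (RaimiAux.thick_univ r)
        (by
          intro x _
          refine ⟨{n : ℕ | cpick n = cpick x}, ?_, rfl⟩
          exact List.mem_map.mpr ⟨cpick x, List.mem_finRange _, rfl⟩)
    obtain ⟨m, -, rfl⟩ := List.mem_map.mp hAmem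
    refine ⟨m, (RaimiAux.bb r) ^ (e₁ + 1), fun _ => (RaimiAux.bb r) ^ (e₁ + 1),
      pow_pos (RaimiAux.bb_pos r) _, fun _ => pow_pos (RaimiAux.bb_pos r) _, ?_⟩
    intro h hh i
    have hhd : (RaimiAux.bb r) ^ (e₁ + 1) ≤ k * h := by
      obtain ⟨s, hs, rfl⟩ := hh
      have h1 : (RaimiAux.bb r) ^ (e₁ + 1) ≤ (RaimiAux.bb r) ^ (e₁ + 1) + ∑ n ∈ s, (RaimiAux.bb r) ^ (e₁ + 1) :=
        Nat.le_add_right _ _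
      have h2 : (RaimiAux.bb r) ^ (e₁ + 1) + ∑ n ∈ s, (RaimiAux.bb r) ^ (e₁ + 1)
          ≤ k * ((RaimiAux.bb r) ^ (e₁ + 1) + ∑ n ∈ s, (RaimiAux.bb r) ^ (e₁ + 1)) :=
        Nat.le_mul_of_pos_left _ hk
      exact le_trans h1 h2
    set W : Set ℕ := {n | cpick n = m ∧ RaimiAux.gval r (n + k * h) = i.val} with hW
    have hWinf : W.Infinite := by
      apply Set.infinite_of_not_bddAbove
      rintro ⟨ub, hub⟩
      obtain ⟨n, hn1, hn2, hn3⟩ :=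
        RaimiAux.witness r hr _ e₁ hdense (k * h) i.val (ub + 1) i.isLt hhd
      have hmem : n ∈ W := ⟨hn2, hn3⟩
      have := hub hmem
      omega
    set Φ : ℕ → (Fin k → ℕ) := fun n => P n + (fun _ => h) with hΦ
    have hinj : Set.InjOn Φ W := by
      intro a _ a' _ hab
      have h1 := congrFun hab j0
      simp [hΦ, hP] at h1
      exact h1
    have hsub : Φ '' W ⊆
        ((fun p : Fin k → ℕ => p + fun _ => h) '' F m) ∩
          {q : Fin k → ℕ | RaimiAux.gval r (∑ j, q j) = i.val} := by
      rintro _ ⟨n, ⟨hn1, hn2⟩, rfl⟩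
      constructor
      · exact ⟨P n, by rw [← hn1]; exact hcpick n, rfl⟩
      · show RaimiAux.gval r (∑ j, (Φ n) j) = i.val
        have hsum : (∑ j, (Φ n) j) = n + k * h := by
          have : (∑ j, (Φ n) j) = (∑ j, P n j) + (∑ _j : Fin k, h) := by
            rw [← Finset.sum_add_distrib]
            rfl
          rw [this, hPsum]
          simp [Finset.sum_const, Finset.card_univ, Nat.smul_one_eq_cast]
        rw [hsum]
        exact hn2
    exact ((hWinf.image hinj).mono hsub)
end

section
/- Let r, t, k, f ∈ ℕ and let P^{(1)}, …, P^{(f)} ∈ ℤ[x] be non-constant polynomials with positive leading coefficients and P^{(j)}(0) = 0 for all j. There exists a partition ℕ^k = E_1 ∪ ⋯ ∪ E_r such that for every t-coloring ℕ^k = F_1 ∪ ⋯ ∪ F_t, there exist a single color class F_m, an element x_0 ∈ ℕ, and a set H ⊆ ℕ of positive lower density such that for every h ∈ H, every j ∈ {1, …, f}, and every i ∈ {1, …, r}, the set (F_m + (x_0 + P^{(j)}(h))·𝟙_k) ∩ E_i is infinite. -/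
open Filter
open scoped Classical

namespace RaimiAux

/-- index of the block containing `n`: block `q` is `[(q+1)^2 - 1, (q+2)^2 - 1)`. -/
def qOf (n : ℕ) : ℕ := Nat.sqrt (n + 1) - 1

def bs (q : ℕ) : ℕ := (q + 1) * (q + 1) - 1

lemma bs_lt_bs_succ (q : ℕ) : bs q + 2 * q + 3 = bs (q + 1) := by
  unfold bs
  have e1 : (q + 1) * (q + 1) = q * q + 2 * q + 1 := by ring
  have e2 : (q + 1 + 1) * (q + 1 + 1) = q * q + 4 * q + 4 := by ring
  omega

lemma qOf_eq {q n : ℕ} (h1 : bs q ≤ n) (h2 : n < bs (q + 1)) : qOf n = q := by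
  unfold bs at h1 h2
  have e2 : (q + 1 + 1) * (q + 1 + 1) = (q + 2) * (q + 2) := by ring
  have hq1 : 1 ≤ (q + 1) * (q + 1) := Nat.one_le_iff_ne_zero.2 (by positivity)
  have ha : (q + 1) * (q + 1) ≤ n + 1 := by omega
  have hb : n + 1 < (q + 2) * (q + 2) := by omega
  have h3 : q + 1 ≤ Nat.sqrt (n + 1) := Nat.le_sqrt.2 ha
  have h4 : Nat.sqrt (n + 1) < q + 2 := Nat.sqrt_lt.2 hb
  unfold qOf; omega

/-- the block index sequence: block `q` has index `(unpair q).2`. -/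
def aseq (q : ℕ) : ℕ := (Nat.unpair q).2

def idx (n : ℕ) : ℕ := aseq (qOf n)

def col (r n : ℕ) : ℕ := (n / r ^ idx n) % r

def Good (r a : ℕ) : Set ℕ :=
  {n | r ^ (a + 1) ∣ n ∧ ∀ d ≤ qOf n, idx (n + d) = a}

lemma good_unbounded (r a : ℕ) (hr : 0 < r) (B : ℕ) : ∃ n, B < n ∧ n ∈ Good r a := by
  set p := r ^ (a + 1) with hp
  have hp0 : 0 < p := by positivity
  set Z := max B p + 1 with hZ
  set q := Nat.pair Z a with hq
  have hZq : Z ≤ q := Nat.left_le_pair Z a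
  have haseq : aseq q = a := by simp [aseq, hq]
  set n := p * (bs q / p + 1) with hn
  have hd : p ∣ n := Dvd.intro _ rfl
  have hdm := Nat.div_add_mod (bs q) p
  have h1 : bs q < n := by
    have : p * (bs q / p) + p > bs q := by
      have := Nat.mod_lt (bs q) hp0
      omega
    simpa [hn, Nat.mul_add] using this
  have h2 : n ≤ bs q + p := by
    have : p * (bs q / p) ≤ bs q := by omega
    simp only [hn, Nat.mul_add, Nat.mul_one]
    omega
  have hpq : p < q := by omega
  have hqB : q ≤ bs q := by
    unfold bs
    have : q + 1 ≤ (q + 1) * (q + 1) := Nat.le_mul_of_pos_left _ (by omega)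
    omega
  have hnB : B < n := by omega
  have hqOfn : qOf n = q := qOf_eq (by omega) (by have := bs_lt_bs_succ q; omega)
  refine ⟨n, hnB, hd, ?_⟩
  intro d hd'
  rw [hqOfn] at hd'
  have : qOf (n + d) = q := qOf_eq (by omega) (by have := bs_lt_bs_succ q; omega)
  simp [idx, this, haseq]

lemma good_infinite (r a : ℕ) (hr : 0 < r) : (Good r a).Infinite := by
  apply Set.infinite_of_not_bddAbove
  rintro ⟨ub, hub⟩
  obtain ⟨n, hn, hmem⟩ := good_unbounded r a hr ub
  exact absurd (hub hmem) (by omega)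

lemma exists_infinite_fiber' {α β : Type*} [Finite β] {S : Set α} (hS : S.Infinite)
    (g : α → β) : ∃ b, {x ∈ S | g x = b}.Infinite := by
  by_contra h
  push_neg at h
  have hsub : S ⊆ ⋃ b, {x ∈ S | g x = b} := fun x hx => Set.mem_iUnion.2 ⟨g x, hx, rfl⟩
  exact hS ((Set.finite_iUnion h).subset hsub)

lemma exists_strictMono_into {M : Set ℕ} (hM : M.Infinite) :
    ∃ σ : ℕ → ℕ, StrictMono σ ∧ ∀ n, σ n ∈ M := by
  choose g hg1 hg2 using hM.exists_gt
  refine ⟨fun n => Nat.rec (g 0) (fun _ p => g p) n, strictMono_nat_of_lt_succ ?_, ?_⟩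
  · intro n; exact hg2 _
  · intro n; cases n <;> exact hg1 _

lemma low_lt (r : ℕ) (hr : 0 < r) (σ : ℕ → ℕ) (hσ : StrictMono σ) :
    ∀ L, L ≤ r → (∑ j ∈ Finset.range L, j * r ^ σ j) < r ^ σ L := by
  intro L
  induction L with
  | zero => intro _; simpa using pow_pos hr (σ 0)
  | succ L ih =>
    intro hL
    rw [Finset.sum_range_succ]
    have h1 : (∑ j ∈ Finset.range L, j * r ^ σ j) < r ^ σ L := ih (by omega)
    have h2 : (L + 1) * r ^ σ L ≤ r * r ^ σ L :=
      Nat.mul_le_mul_right _ (by omega)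
    have h3 : r * r ^ σ L = r ^ (σ L + 1) := by ring
    have h4 : r ^ (σ L + 1) ≤ r ^ σ (L + 1) :=
      Nat.pow_le_pow_right hr (hσ (Nat.lt_succ_self L))
    nlinarith

lemma digit_sum (r : ℕ) (hr : 0 < r) (σ : ℕ → ℕ) (hσ : StrictMono σ)
    (ℓ : ℕ) (hℓ : ℓ < r) :
    ((∑ j ∈ Finset.range r, j * r ^ σ j) / r ^ σ ℓ) % r = ℓ := by
  set x := ∑ j ∈ Finset.range r, j * r ^ σ j with hx
  have hsplit : x = (∑ j ∈ Finset.range ℓ, j * r ^ σ j) + ℓ * r ^ σ ℓ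
      + ∑ j ∈ Finset.Ico (ℓ + 1) r, j * r ^ σ j := by
    rw [hx, ← Finset.sum_range_add_sum_Ico _ (by omega : ℓ + 1 ≤ r),
      Finset.sum_range_succ]
  have hdvd : r ^ (σ ℓ + 1) ∣ ∑ j ∈ Finset.Ico (ℓ + 1) r, j * r ^ σ j := by
    apply Finset.dvd_sum
    intro j hj
    have : σ ℓ + 1 ≤ σ j := by
      have : ℓ < j := by simp [Finset.mem_Ico] at hj; omega
      exact Nat.succ_le_of_lt (hσ this)
    exact Dvd.dvd.mul_left (pow_dvd_pow r this) j
  obtain ⟨u, hu⟩ := hdvd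
  have hlow := low_lt r hr σ hσ ℓ (by omega)
  have hpos : 0 < r ^ σ ℓ := by positivity
  have : x = (∑ j ∈ Finset.range ℓ, j * r ^ σ j) + r ^ σ ℓ * (ℓ + r * u) := by
    rw [hsplit, hu]; ring
  rw [this, Nat.add_mul_div_left _ _ hpos, Nat.div_eq_of_lt hlow, Nat.zero_add,
    Nat.add_mul_mod_self_left, Nat.mod_eq_of_lt hℓ]

end RaimiAux


/-- Theorem 1.3 (polynomial Raimi): for non-constant `P⁽¹⁾,…,P⁽ᶠ⁾ ∈ ℤ[x]` with positive
leading coefficients and `P⁽ʲ⁾(0)=0`, there is a partition `ℕ^k = E₁ ∪ ⋯ ∪ E_r` such that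
for every `t`-coloring `ℕ^k = F₁ ∪ ⋯ ∪ F_t` there are a color class `F_m`, `x₀ ∈ ℕ` and a
set `H ⊆ ℕ` of positive lower density such that for every `h ∈ H`, every `j` and every `i`,
the set `(F_m + (x₀ + P⁽ʲ⁾(h))·𝟙_k) ∩ E_i` is infinite. -/
theorem raimi_polynomial (r t k f : ℕ) (hr : 0 < r) (ht : 0 < t) (hk : 0 < k) (hf : 0 < f)
    (P : Fin f → Polynomial ℤ) (hdeg : ∀ j, 0 < (P j).natDegree)
    (hlead : ∀ j, 0 < (P j).leadingCoeff) (h0 : ∀ j, (P j).eval 0 = 0) :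
    ∃ E : Fin r → Set (Fin k → ℕ), (∀ p : Fin k → ℕ, ∃! i, p ∈ E i) ∧
      ∀ F : Fin t → Set (Fin k → ℕ), (∀ p : Fin k → ℕ, ∃! m, p ∈ F m) →
        ∃ (m : Fin t) (x₀ : ℕ) (H : Set ℕ), 0 < x₀ ∧
          (0 < atTop.liminf (fun N : ℕ =>
            (((Finset.Icc 1 N).filter (fun n => n ∈ H)).card : ℝ) / N)) ∧
          ∀ h ∈ H, ∀ j : Fin f, 0 ≤ (P j).eval (h : ℤ) ∧
            ∀ i : Fin r,
              Set.Infinite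
                (((fun p : Fin k → ℕ =>
                    p + fun _ => x₀ + ((P j).eval (h : ℤ)).toNat) '' F m) ∩ E i) := by
  classical
  set z : Fin k := ⟨0, hk⟩ with hz
  refine ⟨fun i => {p | RaimiAux.col r (p z) = i.val}, ?_, ?_⟩
  · intro p
    have hlt : RaimiAux.col r (p z) < r := Nat.mod_lt _ hr
    exact ⟨⟨RaimiAux.col r (p z), hlt⟩, rfl, fun y hy => Fin.ext hy.symm⟩
  · intro F hF
    set χ : ℕ → Fin t := fun n => (hF (fun _ => n)).choose with hχdef
    have hχ : ∀ n : ℕ, (fun _ => n : Fin k → ℕ) ∈ F (χ n) := fun n => (hF _).choose_spec.1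
    choose mfun hmfun using fun a =>
      RaimiAux.exists_infinite_fiber' (RaimiAux.good_infinite r a hr) χ
    obtain ⟨m, hM⟩ := RaimiAux.exists_infinite_fiber'
      (Set.infinite_univ : (Set.univ : Set ℕ).Infinite) mfun
    have hM' : {a | mfun a = m}.Infinite := by
      simpa using hM
    obtain ⟨σ, hσmono, hσmem⟩ := RaimiAux.exists_strictMono_into hM'
    set Q := r ^ σ r with hQdef
    have hQpos : 0 < Q := by positivity
    set x := ∑ j ∈ Finset.range r, j * r ^ σ j with hxdef
    set x₀ := x + Q with hx0def
    have hev : ∀ᶠ h : ℕ in atTop, ∀ j : Fin f, 0 ≤ (P j).eval (h : ℤ) := by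
      rw [eventually_all]
      intro j
      have hmap : ∀ n : ℕ,
          ((P j).map (Int.castRingHom ℝ)).eval ((n : ℤ) : ℝ) = (((P j).eval (n : ℤ) : ℤ) : ℝ) := by
        intro n
        rw [Polynomial.eval_map,
          show (((n : ℤ) : ℝ)) = (Int.castRingHom ℝ) ((n : ℤ)) from rfl,
          Polynomial.eval₂_at_apply]
        rfl
      have hdeg' : 0 < ((P j).map (Int.castRingHom ℝ)).degree := by
        rw [Polynomial.degree_map_eq_of_injective
          (by exact_mod_cast Int.cast_injective : Function.Injective (Int.castRingHom ℝ))]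
        exact Polynomial.natDegree_pos_iff_degree_pos.mp (hdeg j)
      have hlead' : 0 ≤ ((P j).map (Int.castRingHom ℝ)).leadingCoeff := by
        rw [Polynomial.leadingCoeff_map_of_injective
          (by exact_mod_cast Int.cast_injective : Function.Injective (Int.castRingHom ℝ))]
        show (0 : ℝ) ≤ (((P j).leadingCoeff : ℤ) : ℝ)
        exact_mod_cast (hlead j).le
      have htend := Polynomial.tendsto_atTop_of_leadingCoeff_nonneg _ hdeg' hlead'
      have hcast : Filter.Tendsto (fun n : ℕ => ((n : ℤ) : ℝ)) atTop atTop := by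
        have he : (fun n : ℕ => ((n : ℤ) : ℝ)) = fun n : ℕ => (n : ℝ) := by
          funext n; push_cast; ring
        rw [he]; exact tendsto_natCast_atTop_atTop
      have h2 := (htend.comp hcast).eventually_ge_atTop 0
      filter_upwards [h2] with n hn
      simp only [Function.comp_apply] at hn
      have hn' : (0 : ℝ) ≤ (((P j).eval (n : ℤ) : ℤ) : ℝ) := by
        rw [← hmap n]; exact hn
      exact_mod_cast hn'
    obtain ⟨N₀, hN₀⟩ := eventually_atTop.1 hev
    set Nb := N₀ + 1 with hNb
    refine ⟨m, x₀, {h | Q ∣ h ∧ Nb ≤ h}, by omega, ?_, ?_⟩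
    · -- density
      have main : ∀ W : ℕ → Finset ℕ,
          (∀ N n, n ∈ W N ↔ n ∈ Finset.Icc 1 N ∧ (Q ∣ n ∧ Nb ≤ n)) →
          0 < atTop.liminf (fun N => ((W N).card : ℝ) / N) := by
        intro W hW
        have hcard : ∀ N : ℕ, (Finset.Icc Nb (N / Q)).card ≤ (W N).card := by
          intro N
          apply Finset.card_le_card_of_injOn (fun j => Q * j)
          · intro j hj
            rw [Finset.mem_coe, Finset.mem_Icc] at hj
            have hj2 : j * Q ≤ N := (Nat.le_div_iff_mul_le hQpos).1 hj.2
            have hj2' : Q * j ≤ N := by rw [mul_comm]; exact hj2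
            have hj3 : j ≤ Q * j := Nat.le_mul_of_pos_left j hQpos
            show Q * j ∈ (W N : Set ℕ)
            rw [Finset.mem_coe, hW, Finset.mem_Icc]
            refine ⟨⟨by omega, hj2'⟩, dvd_mul_right Q j, by omega⟩
          · intro a _ b _ hab
            exact Nat.eq_of_mul_eq_mul_left hQpos hab
        have hbound : ∀ᶠ N in atTop, (1 : ℝ) / (2 * Q) ≤ ((W N).card : ℝ) / N := by
          rw [eventually_atTop]
          refine ⟨max (2 * Q * (Nb + 1)) 1, fun N hN => ?_⟩
          have hN1 : 1 ≤ N := le_trans (le_max_right _ _) hN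
          have hN2 : 2 * Q * (Nb + 1) ≤ N := le_trans (le_max_left _ _) hN
          have hv : 2 * (Nb + 1) ≤ N / Q := by
            rw [Nat.le_div_iff_mul_le hQpos]
            calc 2 * (Nb + 1) * Q = 2 * Q * (Nb + 1) := by ring
            _ ≤ N := hN2
          have hIccCard : (Finset.Icc Nb (N / Q)).card = N / Q + 1 - Nb := Nat.card_Icc _ _
          have hdd : N / Q / 2 = N / (Q * 2) := Nat.div_div_eq_div_mul _ _ _
          have hc1 : N / (Q * 2) + 1 ≤ (W N).card := by
            have h5 := hcard N
            omega
          have hmul : N < (Q * 2) * (N / (Q * 2) + 1) := by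
            rw [Nat.mul_succ]
            have h6 := Nat.div_add_mod N (Q * 2)
            have h7 := Nat.mod_lt N (by omega : 0 < Q * 2)
            omega
          have hfin : N ≤ (Q * 2) * (W N).card :=
            le_trans hmul.le (Nat.mul_le_mul_left _ hc1)
          rw [div_le_div_iff₀ (by positivity) (by exact_mod_cast hN1 : (0 : ℝ) < N)]
          have h9 : (N : ℝ) ≤ (Q * 2) * (W N).card := by exact_mod_cast hfin
          nlinarith [h9]
        have hub : ∀ᶠ N in atTop, ((W N).card : ℝ) / N ≤ 1 := by
          filter_upwards [eventually_ge_atTop 1] with N hN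
          have h8 : (W N).card ≤ N := by
            calc (W N).card ≤ (Finset.Icc 1 N).card :=
              Finset.card_le_card (fun n hn => ((hW N n).1 hn).1)
            _ = N := by rw [Nat.card_Icc]; omega
          rw [div_le_one (by exact_mod_cast hN : (0 : ℝ) < N)]
          exact_mod_cast h8
        have hcb := (isBoundedUnder_of_eventually_le hub).isCoboundedUnder_ge
        refine lt_of_lt_of_le ?_ (le_liminf_of_le (by exact hcb) hbound)
        positivity
      exact main _ (fun N n => by simp [Finset.mem_filter, Set.mem_setOf_eq])
    · -- main property
      intro h hh j
      obtain ⟨hQh, hNbh⟩ := hh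
      have hnonneg : 0 ≤ (P j).eval (h : ℤ) := hN₀ h (by omega) j
      refine ⟨hnonneg, fun i => ?_⟩
      set a := σ i.val with ha
      set T := ((P j).eval (h : ℤ)).toNat with hT
      set c := x₀ + T with hcdef
      have hdvdT : Q ∣ T := by
        have h1 : ((h : ℤ) - 0) ∣ (P j).eval (h : ℤ) - (P j).eval 0 :=
          Polynomial.sub_dvd_eval_sub _ _ _
        rw [h0 j, sub_zero, sub_zero] at h1
        have h3 : (Q : ℤ) ∣ (P j).eval (h : ℤ) := (Int.natCast_dvd_natCast.2 hQh).trans h1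
        rw [← Int.toNat_of_nonneg hnonneg] at h3
        exact_mod_cast h3
      have haQ : r ^ (a + 1) ∣ Q := pow_dvd_pow r (Nat.succ_le_of_lt (hσmono i.isLt))
      have hGm : {n ∈ RaimiAux.Good r a | χ n = m}.Infinite := by
        have h9 := hmfun a
        have hma : mfun a = m := hσmem i.val
        rwa [hma] at h9
      have hG' : ({n ∈ RaimiAux.Good r a | χ n = m} \ {n | n < (c + 1) * (c + 1)}).Infinite :=
        hGm.diff (Set.finite_lt_nat _)
      have hinj : Set.InjOn (fun n => (fun _ : Fin k => n + c))
          ({n ∈ RaimiAux.Good r a | χ n = m} \ {n | n < (c + 1) * (c + 1)}) := by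
        intro n1 _ n2 _ heq
        have := congrFun heq z
        simpa using this
      apply Set.Infinite.mono ?_ (hG'.image hinj)
      rintro _ ⟨n, hn, rfl⟩
      obtain ⟨⟨hgood, hχn⟩, hbig⟩ := hn
      have hbig' : (c + 1) * (c + 1) ≤ n := by
        simp only [Set.mem_setOf_eq, not_lt] at hbig
        exact hbig
      constructor
      · refine ⟨(fun _ => n), ?_, ?_⟩
        · have h10 := hχ n
          rwa [hχn] at h10
        · funext w
          rfl
      · -- E i membership
        have hcq : c ≤ RaimiAux.qOf n := by
          have h11 : (c + 1) * (c + 1) ≤ n + 1 := by omega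
          have h12 := Nat.le_sqrt.2 h11
          unfold RaimiAux.qOf
          omega
        have hidx : RaimiAux.idx (n + c) = a := hgood.2 c hcq
        obtain ⟨w, hw⟩ := hgood.1
        show RaimiAux.col r ((fun _ : Fin k => n + c) z) = i.val
        show RaimiAux.col r (n + c) = i.val
        unfold RaimiAux.col
        rw [hidx]
        have hsplit : n + c = c + r ^ a * (r * w) := by
          rw [hw, pow_succ]; ring
        rw [hsplit, Nat.add_mul_div_left _ _ (pow_pos hr a), Nat.add_mul_mod_self_left]
        rw [← Nat.mod_mul_right_div_self]
        have hQT : r ^ (a + 1) ∣ Q + T := dvd_add haQ (haQ.trans hdvdT)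
        obtain ⟨s, hs⟩ := hQT
        have hs' : Q + T = (r ^ a * r) * s := by rw [← pow_succ]; exact hs
        have hcx : c % (r ^ a * r) = x % (r ^ a * r) := by
          have h13 : c = x + (r ^ a * r) * s := by
            rw [hcdef, hx0def, add_assoc, hs']
          rw [h13, Nat.add_mul_mod_self_left]
        rw [hcx, Nat.mod_mul_right_div_self]
        exact RaimiAux.digit_sum r hr σ hσmono i.val i.isLt
end
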